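/- arXiv:1108.1972 — 5 statements merged into one kernel-verified Lean document; each statement's English description precedes it below -/
import Mathlib

section
/- Let X = (X₁,…,X_d) be a random vector whose joint distribution function F is a MEV distribution with unit Fréchet marginals, and let I₁, I₂ be disjoint non-empty subsets of {1,…,d}. Then: (i) for each y ≥ 0, the partial derivative ∂Λ_U^{(I₁,I₂)}(x,y)/∂x exists for almost all x > 0 and satisfies 0 ≤ ∂Λ_U^{(I₁,I₂)}(x,y)/∂x ≤ |I₁|; (ii) for each x ≥ 0, the partial derivative ∂Λ_U^{(I₁,I₂)}(x,y)/∂y exists for almost all y > 0 and satisfies 0 ≤ ∂Λ_U^{(I₁,I₂)}(x,y)/∂y ≤ |I₂|; (iii) the functions x ↦ ∂Λ_U^{(I₁,I₂)}(x,y)/∂y and y ↦ ∂Λ_U^{(I₁,I₂)}(x,y)/∂x are defined and non-decreasing almost everywhere on [0,∞). -/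
open MeasureTheory Filter Finset

/-- The joint distribution function of the random vector `X` under `μ`. -/
noncomputable def jointCDF {Ω : Type*} [MeasurableSpace Ω] (μ : Measure Ω) {d : ℕ}
    (X : Fin d → Ω → ℝ) (x : Fin d → ℝ) : ℝ :=
  (μ {ω | ∀ i, X i ω ≤ x i}).toReal

/-- The marginal distribution function of the `i`-th coordinate of `X` under `μ`. -/
noncomputable def margCDF {Ω : Type*} [MeasurableSpace Ω] (μ : Measure Ω) {d : ℕ}
    (X : Fin d → Ω → ℝ) (i : Fin d) (u : ℝ) : ℝ :=
  (μ {ω | X i ω ≤ u}).toReal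

/-- `l^{(I₁,I₂)}(x,y) = -log F(a₁,…,a_d)` where `aᵢ = x` on `I₁`, `aᵢ = y` on `I₂` and
`aᵢ = ∞` otherwise (taking the limit of `F` in those arguments, i.e. dropping the
corresponding constraints). -/
noncomputable def mevL {Ω : Type*} [MeasurableSpace Ω] (μ : Measure Ω) {d : ℕ}
    (X : Fin d → Ω → ℝ) (I₁ I₂ : Finset (Fin d)) (x y : ℝ) : ℝ :=
  -Real.log (μ {ω | (∀ i ∈ I₁, X i ω ≤ x) ∧ (∀ j ∈ I₂, X j ω ≤ y)}).toReal

/-- The extremal coefficient `ε_I = l^{(I,∅)}(1,1)` of the sub-vector `X_I`. -/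
noncomputable def extCoef {Ω : Type*} [MeasurableSpace Ω] (μ : Measure Ω) {d : ℕ}
    (X : Fin d → Ω → ℝ) (I : Finset (Fin d)) : ℝ :=
  mevL μ X I ∅ 1 1

/-- `M(I) = max_{i ∈ I} F_i(X_i)`. -/
noncomputable def Msub {Ω : Type*} [MeasurableSpace Ω] (μ : Measure Ω) {d : ℕ}
    (X : Fin d → Ω → ℝ) (I : Finset (Fin d)) (hI : I.Nonempty) (ω : Ω) : ℝ :=
  I.sup' hI fun i => margCDF μ X i (X i ω)

/-- The stable tail dependence function `l(x₁,…,x_d) = -log F(x₁,…,x_d)`. -/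
noncomputable def stdf {Ω : Type*} [MeasurableSpace Ω] (μ : Measure Ω) {d : ℕ}
    (X : Fin d → Ω → ℝ) (x : Fin d → ℝ) : ℝ :=
  -Real.log (jointCDF μ X x)

/-- `X` has a multivariate extreme value (max-stable) distribution with unit Fréchet
marginals under the probability measure `μ`. -/
structure IsMEVFrechet {Ω : Type*} [MeasurableSpace Ω] (μ : Measure Ω) {d : ℕ}
    (X : Fin d → Ω → ℝ) : Prop where
  meas : ∀ i, Measurable (X i)
  frechet : ∀ i, ∀ u : ℝ, 0 < u → margCDF μ X i u = Real.exp (-u⁻¹)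
  maxStable : ∀ t : ℝ, 0 < t → ∀ x : Fin d → ℝ, (∀ i, 0 < x i) →
    jointCDF μ X (fun i => t * x i) ^ t = jointCDF μ X x

/-- The upper-tail dependence function `Λ_U^{(I₁,I₂)}` on `[0,∞)²`, with the grounding
convention `Λ_U(x,y) = 0` when `x = 0` or `y = 0`. -/
noncomputable def lambdaU {Ω : Type*} [MeasurableSpace Ω] (μ : Measure Ω) {d : ℕ}
    (X : Fin d → Ω → ℝ) (I₁ I₂ : Finset (Fin d)) (x y : ℝ) : ℝ :=
  if x ≤ 0 ∨ y ≤ 0 then 0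
  else x * extCoef μ X I₁ + y * extCoef μ X I₂ - mevL μ X I₁ I₂ x⁻¹ y⁻¹

namespace St7Aux
open Topology
set_option linter.unusedSectionVars false

variable {Ω : Type*} [MeasurableSpace Ω] {d : ℕ}

/-- The event that all coordinates in `I₁` are at most `u` and all in `I₂` at most `v`. -/
def S (X : Fin d → Ω → ℝ) (I₁ I₂ : Finset (Fin d)) (u v : ℝ) : Set Ω :=
  {ω | (∀ i ∈ I₁, X i ω ≤ u) ∧ (∀ j ∈ I₂, X j ω ≤ v)}

/-- The joint CDF of the sub-vectors over `I₁, I₂`. -/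
noncomputable def G (μ : Measure Ω) (X : Fin d → Ω → ℝ) (I₁ I₂ : Finset (Fin d))
    (u v : ℝ) : ℝ :=
  (μ (S X I₁ I₂ u v)).toReal

lemma mevL_eq (μ : Measure Ω) (X : Fin d → Ω → ℝ) (I₁ I₂ : Finset (Fin d)) (u v : ℝ) :
    mevL μ X I₁ I₂ u v = -Real.log (G μ X I₁ I₂ u v) := rfl

lemma S_comm (X : Fin d → Ω → ℝ) (I₁ I₂ : Finset (Fin d)) (u v : ℝ) :
    S X I₂ I₁ v u = S X I₁ I₂ u v := by
  ext ω; exact and_comm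

lemma G_comm (μ : Measure Ω) (X : Fin d → Ω → ℝ) (I₁ I₂ : Finset (Fin d)) (u v : ℝ) :
    G μ X I₂ I₁ v u = G μ X I₁ I₂ u v := by
  unfold G; rw [S_comm]

lemma S_empty (X : Fin d → Ω → ℝ) (I₁ : Finset (Fin d)) (u v w : ℝ) :
    S X I₁ ∅ u v = S X I₁ ∅ u w := by
  ext ω; simp [S]

lemma G_empty (μ : Measure Ω) (X : Fin d → Ω → ℝ) (I₁ : Finset (Fin d)) (u v w : ℝ) :
    G μ X I₁ ∅ u v = G μ X I₁ ∅ u w := by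
  unfold G; rw [S_empty X I₁ u v w]

lemma measurableSet_S {X : Fin d → Ω → ℝ} (hm : ∀ i, Measurable (X i))
    (I₁ I₂ : Finset (Fin d)) (u v : ℝ) : MeasurableSet (S X I₁ I₂ u v) := by
  have h : S X I₁ I₂ u v =
      (⋂ i ∈ I₁, {ω | X i ω ≤ u}) ∩ (⋂ j ∈ I₂, {ω | X j ω ≤ v}) := by
    ext ω; simp [S]
  rw [h]
  exact (MeasurableSet.biInter (I₁ : Set (Fin d)).to_countable fun i _ =>
      measurableSet_le (hm i) measurable_const).inter
    (MeasurableSet.biInter (I₂ : Set (Fin d)).to_countable fun j _ =>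
      measurableSet_le (hm j) measurable_const)

lemma G_nonneg (μ : Measure Ω) (X : Fin d → Ω → ℝ) (I₁ I₂ : Finset (Fin d)) (u v : ℝ) :
    0 ≤ G μ X I₁ I₂ u v := ENNReal.toReal_nonneg

lemma G_le_one (μ : Measure Ω) [IsProbabilityMeasure μ] (X : Fin d → Ω → ℝ)
    (I₁ I₂ : Finset (Fin d)) (u v : ℝ) : G μ X I₁ I₂ u v ≤ 1 := by
  have : (μ (S X I₁ I₂ u v)) ≤ 1 := prob_le_one
  simpa [G] using ENNReal.toReal_mono ENNReal.one_ne_top this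

lemma S_subset (X : Fin d → Ω → ℝ) (I₁ I₂ : Finset (Fin d)) {u u' v v' : ℝ}
    (hu : u ≤ u') (hv : v ≤ v') : S X I₁ I₂ u v ⊆ S X I₁ I₂ u' v' := by
  rintro ω ⟨ha, hb⟩
  exact ⟨fun i hi => (ha i hi).trans hu, fun j hj => (hb j hj).trans hv⟩

lemma G_mono (μ : Measure Ω) [IsProbabilityMeasure μ] (X : Fin d → Ω → ℝ)
    (I₁ I₂ : Finset (Fin d)) {u u' v v' : ℝ} (hu : u ≤ u') (hv : v ≤ v') :
    G μ X I₁ I₂ u v ≤ G μ X I₁ I₂ u' v' :=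
  ENNReal.toReal_mono (measure_ne_top μ _) (measure_mono (S_subset X I₁ I₂ hu hv))

lemma G_supermod (μ : Measure Ω) [IsProbabilityMeasure μ] {X : Fin d → Ω → ℝ}
    (hm : ∀ i, Measurable (X i)) (I₁ I₂ : Finset (Fin d)) {u₁ u₂ v₁ v₂ : ℝ}
    (hu : u₁ ≤ u₂) (hv : v₁ ≤ v₂) :
    G μ X I₁ I₂ u₂ v₁ + G μ X I₁ I₂ u₁ v₂ ≤ G μ X I₁ I₂ u₂ v₂ + G μ X I₁ I₂ u₁ v₁ := by
  set A := S X I₁ I₂ u₂ v₁ with hA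
  set B := S X I₁ I₂ u₁ v₂ with hB
  have hAB : A ∩ B = S X I₁ I₂ u₁ v₁ := by
    ext ω
    constructor
    · rintro ⟨⟨-, hb1⟩, ⟨ha1, -⟩⟩
      exact ⟨ha1, hb1⟩
    · rintro ⟨ha1, hb1⟩
      exact ⟨⟨fun i hi => (ha1 i hi).trans hu, hb1⟩, ⟨ha1, fun j hj => (hb1 j hj).trans hv⟩⟩
  have hsub : A ∪ B ⊆ S X I₁ I₂ u₂ v₂ :=
    Set.union_subset (S_subset X I₁ I₂ le_rfl hv) (S_subset X I₁ I₂ hu le_rfl)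
  have key : μ A + μ B ≤ μ (S X I₁ I₂ u₂ v₂) + μ (S X I₁ I₂ u₁ v₁) := by
    rw [← measure_union_add_inter A (measurableSet_S hm I₁ I₂ u₁ v₂), hAB]
    exact add_le_add_left (measure_mono hsub) _
  calc G μ X I₁ I₂ u₂ v₁ + G μ X I₁ I₂ u₁ v₂ = (μ A + μ B).toReal :=
        (ENNReal.toReal_add (measure_ne_top μ _) (measure_ne_top μ _)).symm
    _ ≤ (μ (S X I₁ I₂ u₂ v₂) + μ (S X I₁ I₂ u₁ v₁)).toReal :=
        ENNReal.toReal_mono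
          (ENNReal.add_ne_top.2 ⟨measure_ne_top μ _, measure_ne_top μ _⟩) key
    _ = G μ X I₁ I₂ u₂ v₂ + G μ X I₁ I₂ u₁ v₁ :=
        ENNReal.toReal_add (measure_ne_top μ _) (measure_ne_top μ _)

lemma tendsto_G_snd (μ : Measure Ω) [IsProbabilityMeasure μ] (X : Fin d → Ω → ℝ)
    (I₁ I₂ : Finset (Fin d)) {a : ℕ → ℝ} (ha : Monotone a)
    (hat : Tendsto a atTop atTop) (u : ℝ) :
    Tendsto (fun n => G μ X I₁ I₂ u (a n)) atTop (𝓝 (G μ X I₁ ∅ u 0)) := by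
  have hmono : Monotone (fun n => S X I₁ I₂ u (a n)) :=
    fun m n hmn => S_subset X I₁ I₂ le_rfl (ha hmn)
  have hU : ⋃ n, S X I₁ I₂ u (a n) = S X I₁ ∅ u 0 := by
    ext ω
    simp only [Set.mem_iUnion]
    constructor
    · rintro ⟨n, h1, -⟩
      exact ⟨h1, by simp⟩
    · rintro ⟨h1, -⟩
      rcases I₂.eq_empty_or_nonempty with h | h
      · obtain ⟨n, hn⟩ := (hat.eventually_ge_atTop (0 : ℝ)).exists
        exact ⟨n, h1, by simp [h]⟩
      · obtain ⟨n, hn⟩ := (hat.eventually_ge_atTop (I₂.sup' h fun j => X j ω)).exists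
        exact ⟨n, h1, fun j hj => le_trans (Finset.le_sup' (fun j => X j ω) hj) hn⟩
  have h := tendsto_measure_iUnion_atTop (μ := μ) hmono
  rw [hU] at h
  exact (ENNReal.tendsto_toReal (measure_ne_top μ _)).comp h

lemma tendsto_jointCDF_G (μ : Measure Ω) [IsProbabilityMeasure μ] (X : Fin d → Ω → ℝ)
    [Nonempty (Fin d)] (I₁ I₂ : Finset (Fin d)) (hdisj : Disjoint I₁ I₂)
    {a : ℕ → ℝ} (ha : Monotone a)
    (hat : Tendsto a atTop atTop) (u v : ℝ) :
    Tendsto (fun n => jointCDF μ X (fun i => if i ∈ I₁ then u else if i ∈ I₂ then v else a n))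
      atTop (𝓝 (G μ X I₁ I₂ u v)) := by
  set s : ℕ → Set Ω :=
    fun n => {ω | ∀ i, X i ω ≤ (if i ∈ I₁ then u else if i ∈ I₂ then v else a n)} with hs
  have hmono : Monotone s := by
    intro m n hmn ω hω i
    refine (hω i).trans ?_
    split_ifs
    · exact le_rfl
    · exact le_rfl
    · exact ha hmn
  have hU : ⋃ n, s n = S X I₁ I₂ u v := by
    ext ω
    simp only [Set.mem_iUnion]
    constructor
    · rintro ⟨n, hn⟩
      constructor
      · intro i hi
        have := hn i
        rwa [if_pos hi] at this
      · intro j hj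
        have := hn j
        by_cases hj1 : j ∈ I₁
        · exact absurd hj (Finset.disjoint_left.1 hdisj hj1)
        · rwa [if_neg hj1, if_pos hj] at this
    · rintro ⟨h1, h2⟩
      obtain ⟨n, hn⟩ :=
        (hat.eventually_ge_atTop (Finset.univ.sup' Finset.univ_nonempty fun i => X i ω)).exists
      refine ⟨n, fun i => ?_⟩
      split_ifs with hi1 hi2
      · exact h1 i hi1
      · exact h2 i hi2
      · exact le_trans (Finset.le_sup' (fun i => X i ω) (Finset.mem_univ i)) hn
  have h := tendsto_measure_iUnion_atTop (μ := μ) hmono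
  rw [hU] at h
  exact (ENNReal.tendsto_toReal (measure_ne_top μ _)).comp h

lemma G_homog (μ : Measure Ω) [IsProbabilityMeasure μ] {X : Fin d → Ω → ℝ}
    (hX : IsMEVFrechet μ X) [Nonempty (Fin d)] (I₁ I₂ : Finset (Fin d))
    (hdisj : Disjoint I₁ I₂) {t u v : ℝ} (ht : 0 < t) (hu : 0 < u) (hv : 0 < v) :
    G μ X I₁ I₂ (t * u) (t * v) ^ t = G μ X I₁ I₂ u v := by
  set a : ℕ → ℝ := fun n => (n : ℝ) + (max u v + 1) with ha_def
  have ha : Monotone a := fun m n hmn => by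
    simp only [ha_def]
    exact add_le_add_left (Nat.cast_le.2 hmn) _
  have hat : Tendsto a atTop atTop :=
    tendsto_atTop_add_const_right atTop _ tendsto_natCast_atTop_atTop
  have ha' : Monotone (fun n => t * a n) := fun m n hmn =>
    mul_le_mul_of_nonneg_left (ha hmn) ht.le
  have hat' : Tendsto (fun n => t * a n) atTop atTop := hat.const_mul_atTop ht
  have hapos : ∀ n, 0 < a n := fun n => by
    have h1 : (0:ℝ) ≤ (n:ℝ) := Nat.cast_nonneg n
    have h2 : 0 < max u v + 1 := by positivity
    simp only [ha_def]; linarith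
  have h1 := tendsto_jointCDF_G μ X I₁ I₂ hdisj ha hat u v
  have h2 := tendsto_jointCDF_G μ X I₁ I₂ hdisj ha' hat' (t * u) (t * v)
  have heq : ∀ n : ℕ,
      jointCDF μ X (fun i => if i ∈ I₁ then t * u else if i ∈ I₂ then t * v else t * a n) ^ t
        = jointCDF μ X (fun i => if i ∈ I₁ then u else if i ∈ I₂ then v else a n) := by
    intro n
    have hpos : ∀ i, 0 < (if i ∈ I₁ then u else if i ∈ I₂ then v else a n) := by
      intro i; split_ifs
      · exact hu
      · exact hv
      · exact hapos n
    have := hX.maxStable t ht _ hpos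
    have hfun : (fun i => t * (if i ∈ I₁ then u else if i ∈ I₂ then v else a n))
        = (fun i => if i ∈ I₁ then t * u else if i ∈ I₂ then t * v else t * a n) := by
      funext i; split_ifs <;> rfl
    rwa [hfun] at this
  have h3 : Tendsto
      (fun n => jointCDF μ X
        (fun i => if i ∈ I₁ then t * u else if i ∈ I₂ then t * v else t * a n) ^ t)
      atTop (𝓝 (G μ X I₁ I₂ (t * u) (t * v) ^ t)) :=
    ((Real.continuousAt_rpow_const _ t (Or.inr ht.le)).tendsto.comp h2)
  have h4 : Tendsto
      (fun n => jointCDF μ X (fun i => if i ∈ I₁ then u else if i ∈ I₂ then v else a n))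
      atTop (𝓝 (G μ X I₁ I₂ (t * u) (t * v) ^ t)) := by
    refine h3.congr fun n => heq n
  exact tendsto_nhds_unique h4 h1

lemma G_lower (μ : Measure Ω) [IsProbabilityMeasure μ] {X : Fin d → Ω → ℝ}
    (hX : IsMEVFrechet μ X) (I₁ I₂ : Finset (Fin d)) {u v : ℝ} (hu : 0 < u) (hv : 0 < v) :
    1 - ((I₁.card : ℝ) * u⁻¹ + (I₂.card : ℝ) * v⁻¹) ≤ G μ X I₁ I₂ u v := by
  have hcompl : (S X I₁ I₂ u v)ᶜ =
      (⋃ i ∈ I₁, {ω | u < X i ω}) ∪ (⋃ j ∈ I₂, {ω | v < X j ω}) := by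
    ext ω
    simp only [S, Set.mem_compl_iff, Set.mem_setOf_eq, Set.mem_union, Set.mem_iUnion,
      not_and_or, not_forall, not_le, exists_prop]
  have hmeas : ∀ (i : Fin d) (w : ℝ), (μ {ω | X i ω ≤ w}).toReal = margCDF μ X i w :=
    fun i w => rfl
  have hsingle : ∀ (i : Fin d) (w : ℝ), 0 < w → (μ {ω | w < X i ω}).toReal ≤ w⁻¹ := by
    intro i w hw
    have hms : MeasurableSet {ω | X i ω ≤ w} := measurableSet_le (hX.meas i) measurable_const
    have hset : {ω | w < X i ω} = {ω | X i ω ≤ w}ᶜ := by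
      ext ω; simp [not_le]
    have hc : μ {ω | X i ω ≤ w}ᶜ = 1 - μ {ω | X i ω ≤ w} := prob_compl_eq_one_sub hms
    have htr : (μ {ω | w < X i ω}).toReal = 1 - Real.exp (-w⁻¹) := by
      rw [hset, hc, ENNReal.toReal_sub_of_le prob_le_one ENNReal.one_ne_top]
      rw [ENNReal.toReal_one, hmeas, hX.frechet i w hw]
    rw [htr]
    have := Real.add_one_le_exp (-w⁻¹)
    linarith
  -- bound the complement measure
  have hb : (μ (S X I₁ I₂ u v)ᶜ).toReal ≤ (I₁.card : ℝ) * u⁻¹ + (I₂.card : ℝ) * v⁻¹ := by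
    have hle : μ (S X I₁ I₂ u v)ᶜ ≤
        (∑ i ∈ I₁, μ {ω | u < X i ω}) + ∑ j ∈ I₂, μ {ω | v < X j ω} := by
      rw [hcompl]
      exact le_trans (measure_union_le _ _)
        (add_le_add (measure_biUnion_finset_le _ _) (measure_biUnion_finset_le _ _))
    have hfin : ((∑ i ∈ I₁, μ {ω | u < X i ω}) + ∑ j ∈ I₂, μ {ω | v < X j ω}) ≠ ⊤ := by
      refine ENNReal.add_ne_top.2 ⟨?_, ?_⟩ <;>
        exact (ENNReal.sum_lt_top.2 fun _ _ => measure_lt_top μ _).ne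
    refine le_trans (ENNReal.toReal_mono hfin hle) ?_
    rw [ENNReal.toReal_add ((ENNReal.sum_lt_top.2 fun _ _ => measure_lt_top μ _).ne)
      ((ENNReal.sum_lt_top.2 fun _ _ => measure_lt_top μ _).ne),
      ENNReal.toReal_sum (fun _ _ => measure_ne_top μ _),
      ENNReal.toReal_sum (fun _ _ => measure_ne_top μ _)]
    refine add_le_add ?_ ?_
    · calc (∑ i ∈ I₁, (μ {ω | u < X i ω}).toReal) ≤ ∑ _i ∈ I₁, u⁻¹ :=
            Finset.sum_le_sum fun i _ => hsingle i u hu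
        _ = (I₁.card : ℝ) * u⁻¹ := by rw [Finset.sum_const, nsmul_eq_mul]
    · calc (∑ j ∈ I₂, (μ {ω | v < X j ω}).toReal) ≤ ∑ _j ∈ I₂, v⁻¹ :=
            Finset.sum_le_sum fun j _ => hsingle j v hv
        _ = (I₂.card : ℝ) * v⁻¹ := by rw [Finset.sum_const, nsmul_eq_mul]
  have hms : MeasurableSet (S X I₁ I₂ u v) := measurableSet_S hX.meas I₁ I₂ u v
  have h1 : (μ (S X I₁ I₂ u v)ᶜ).toReal = 1 - G μ X I₁ I₂ u v := by
    rw [prob_compl_eq_one_sub hms, ENNReal.toReal_sub_of_le prob_le_one ENNReal.one_ne_top,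
      ENNReal.toReal_one]
    rfl
  rw [h1] at hb
  linarith

lemma G_pos (μ : Measure Ω) [IsProbabilityMeasure μ] {X : Fin d → Ω → ℝ}
    (hX : IsMEVFrechet μ X) [Nonempty (Fin d)] (I₁ I₂ : Finset (Fin d))
    (hdisj : Disjoint I₁ I₂) {u v : ℝ} (hu : 0 < u) (hv : 0 < v) :
    0 < G μ X I₁ I₂ u v := by
  set C := (I₁.card : ℝ) * u⁻¹ + (I₂.card : ℝ) * v⁻¹ with hC
  have hC0 : 0 ≤ C := by positivity
  set t := C + 1 with ht_def
  have ht : 0 < t := by linarith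
  have hlow := G_lower μ hX I₁ I₂ (mul_pos ht hu) (mul_pos ht hv)
  have harith : (I₁.card : ℝ) * (t * u)⁻¹ + (I₂.card : ℝ) * (t * v)⁻¹ = C * t⁻¹ := by
    rw [mul_inv, mul_inv, hC]
    ring
  rw [harith] at hlow
  have hlt : C * t⁻¹ < 1 := by
    rw [mul_inv_lt_iff₀ ht, one_mul]
    linarith
  have hpos : 0 < G μ X I₁ I₂ (t * u) (t * v) := by linarith
  rw [← G_homog μ hX I₁ I₂ hdisj ht hu hv]
  exact Real.rpow_pos_of_pos hpos t

lemma G_marg (μ : Measure Ω) [IsProbabilityMeasure μ] {X : Fin d → Ω → ℝ}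
    (hX : IsMEVFrechet μ X) [Nonempty (Fin d)] (I : Finset (Fin d)) {u : ℝ} (hu : 0 < u) :
    G μ X I ∅ u 0 = Real.exp (-(extCoef μ X I) / u) := by
  have hdisj : Disjoint I (∅ : Finset (Fin d)) := Finset.disjoint_empty_right I
  have hg1 : 0 < G μ X I ∅ 1 1 := G_pos μ hX I ∅ hdisj one_pos one_pos
  have hgu : 0 < G μ X I ∅ u u := G_pos μ hX I ∅ hdisj hu hu
  have hhom := G_homog μ hX I ∅ hdisj hu one_pos one_pos
  rw [mul_one] at hhom
  -- hhom : G μ X I ∅ u u ^ u = G μ X I ∅ 1 1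
  have hlog : u * Real.log (G μ X I ∅ u u) = Real.log (G μ X I ∅ 1 1) := by
    rw [← hhom, Real.log_rpow hgu]
  have hext : extCoef μ X I = -Real.log (G μ X I ∅ 1 1) := rfl
  have : Real.log (G μ X I ∅ u 0) = -(extCoef μ X I) / u := by
    rw [G_empty μ X I u 0 u, hext, neg_neg]
    field_simp
    linarith [hlog]
  rw [← this, Real.exp_log]
  rw [G_empty μ X I u 0 u]
  exact hgu

lemma extCoef_nonneg (μ : Measure Ω) [IsProbabilityMeasure μ] (X : Fin d → Ω → ℝ)
    (I : Finset (Fin d)) : 0 ≤ extCoef μ X I := by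
  have h : extCoef μ X I = -Real.log (G μ X I ∅ 1 1) := rfl
  rw [h]
  have := Real.log_nonpos (G_nonneg μ X I ∅ 1 1) (G_le_one μ X I ∅ 1 1)
  linarith

lemma extCoef_le_card (μ : Measure Ω) [IsProbabilityMeasure μ] {X : Fin d → Ω → ℝ}
    (hX : IsMEVFrechet μ X) (I : Finset (Fin d)) (hI : I.Nonempty) :
    extCoef μ X I ≤ (I.card : ℝ) := by
  haveI : Nonempty (Fin d) := ⟨hI.choose⟩
  set k : ℝ := (I.card : ℝ) with hk
  have hk1 : 1 ≤ k := by
    rw [hk]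
    exact_mod_cast hI.card_pos
  have hk0 : 0 < k := lt_of_lt_of_le one_pos hk1
  set e := extCoef μ X I with he
  have key : ∀ s : ℝ, 0 < s → e ≤ k + k ^ 2 / s := by
    intro s hs
    set u := k + s with hu_def
    have hu : 0 < u := by linarith
    have hlow := G_lower μ hX I ∅ hu hu
    rw [G_empty μ X I u u 0, G_marg μ hX I hu] at hlow
    simp only [Finset.card_empty, Nat.cast_zero, zero_mul, add_zero] at hlow
    -- hlow : 1 - k * u⁻¹ ≤ exp (-e/u)
    have h1ku : 1 - k * u⁻¹ = s / u := by
      rw [hu_def]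
      field_simp
      ring
    rw [h1ku] at hlow
    have hsu : 0 < s / u := div_pos hs hu
    have hlog : Real.log (s / u) ≤ -e / u := (Real.log_le_iff_le_exp hsu).2 hlow
    have hlog2 : Real.log (u / s) ≤ u / s - 1 :=
      Real.log_le_sub_one_of_pos (div_pos hu hs)
    have hlogeq : Real.log (s / u) = -Real.log (u / s) := by
      rw [← Real.log_inv]
      congr 1
      rw [inv_div]
    rw [hlogeq] at hlog
    -- -log(u/s) ≤ -e/u  ⇒  e ≤ u * log(u/s) ≤ u * (u/s - 1) = u * k / s
    have he_le : e ≤ u * Real.log (u / s) := by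
      have := mul_le_mul_of_nonneg_left hlog hu.le
      -- u * (-log(u/s)) ≤ u * (-e/u) = -e
      have harr : u * (-e / u) = -e := by
        rw [mul_comm]
        exact div_mul_cancel₀ (-e) hu.ne'
      rw [harr] at this
      have hmn : u * -Real.log (u / s) = -(u * Real.log (u / s)) := by ring
      rw [hmn] at this
      linarith [mul_comm u (Real.log (u / s))]
    have hfin : u * Real.log (u / s) ≤ u * (u / s - 1) :=
      mul_le_mul_of_nonneg_left hlog2 hu.le
    have harith : u * (u / s - 1) = k + k ^ 2 / s := by
      field_simp
      ring
    linarith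
  refine le_of_forall_pos_le_add fun δ hδ => ?_
  have := key (k ^ 2 / δ) (by positivity)
  have harith : k ^ 2 / (k ^ 2 / δ) = δ := by
    field_simp
  rw [harith] at this
  linarith

/-- Key elementary estimate: if `z ^ t = c` with `t ≥ 1`, `0 < c ≤ 1`, then the
"remainder" `z - 1 - log z` is at most `(log c)² / (t² c)`. -/
lemma r_bound {t c z : ℝ} (ht : 1 ≤ t) (hc : 0 < c) (hc1 : c ≤ 1) (hz : 0 < z)
    (hzt : z ^ t = c) : z - 1 - Real.log z ≤ (Real.log c) ^ 2 / (t ^ 2 * c) := by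
  have ht0 : 0 < t := lt_of_lt_of_le one_pos ht
  have hz1 : z ≤ 1 := by
    rcases le_or_gt z 1 with h | h
    · exact h
    · exfalso
      have : z ^ (1:ℝ) ≤ z ^ t := Real.rpow_le_rpow_of_exponent_le h.le ht
      rw [Real.rpow_one, hzt] at this
      linarith
  have hzc : c ≤ z := by
    have : z ^ t ≤ z ^ (1:ℝ) := Real.rpow_le_rpow_of_exponent_ge hz hz1 ht
    rw [Real.rpow_one, hzt] at this
    exact this
  have hlogc : Real.log c = t * Real.log z := by rw [← hzt, Real.log_rpow hz]
  have h1z : 1 - z ≤ -Real.log z := by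
    have := Real.log_le_sub_one_of_pos hz
    linarith
  have h1z0 : 0 ≤ 1 - z := by linarith
  have hr : z - 1 - Real.log z ≤ (1 - z) ^ 2 / z := by
    have h2 := Real.one_sub_inv_le_log_of_pos hz
    have heq : (1 - z) ^ 2 / z = z - 2 + z⁻¹ := by
      field_simp
      ring
    rw [heq]
    linarith
  have hsq : (1 - z) ^ 2 ≤ (Real.log c) ^ 2 / t ^ 2 := by
    have hbound : 1 - z ≤ -Real.log c / t := by
      rw [hlogc]
      have : -(t * Real.log z) / t = -Real.log z := by
        rw [neg_div, mul_div_cancel_left₀ _ ht0.ne']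
      rw [this]
      exact h1z
    have h0 : 0 ≤ -Real.log c / t := le_trans h1z0 hbound
    have := mul_self_le_mul_self h1z0 hbound
    calc (1 - z) ^ 2 = (1 - z) * (1 - z) := sq (1 - z) ▸ by ring
      _ ≤ (-Real.log c / t) * (-Real.log c / t) := this
      _ = (Real.log c) ^ 2 / t ^ 2 := by ring
  calc z - 1 - Real.log z ≤ (1 - z) ^ 2 / z := hr
    _ ≤ ((Real.log c) ^ 2 / t ^ 2) / z := by gcongr
    _ = (Real.log c) ^ 2 / (t ^ 2 * z) := by rw [div_div]
    _ ≤ (Real.log c) ^ 2 / (t ^ 2 * c) := by gcongr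

lemma logG_supermod (μ : Measure Ω) [IsProbabilityMeasure μ] {X : Fin d → Ω → ℝ}
    (hX : IsMEVFrechet μ X) [Nonempty (Fin d)] (I₁ I₂ : Finset (Fin d))
    (hdisj : Disjoint I₁ I₂) {u₁ u₂ v₁ v₂ : ℝ} (hu1 : 0 < u₁) (hu : u₁ ≤ u₂)
    (hv1 : 0 < v₁) (hv : v₁ ≤ v₂) :
    Real.log (G μ X I₁ I₂ u₂ v₁) + Real.log (G μ X I₁ I₂ u₁ v₂) ≤
      Real.log (G μ X I₁ I₂ u₂ v₂) + Real.log (G μ X I₁ I₂ u₁ v₁) := by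
  have hu2 : 0 < u₂ := lt_of_lt_of_le hu1 hu
  have hv2 : 0 < v₂ := lt_of_lt_of_le hv1 hv
  set c11 := G μ X I₁ I₂ u₁ v₁ with hc11
  set c12 := G μ X I₁ I₂ u₁ v₂ with hc12
  set c21 := G μ X I₁ I₂ u₂ v₁ with hc21
  set c22 := G μ X I₁ I₂ u₂ v₂ with hc22
  have hp11 : 0 < c11 := G_pos μ hX I₁ I₂ hdisj hu1 hv1
  have hp12 : 0 < c12 := G_pos μ hX I₁ I₂ hdisj hu1 hv2
  have hp21 : 0 < c21 := G_pos μ hX I₁ I₂ hdisj hu2 hv1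
  have hp22 : 0 < c22 := G_pos μ hX I₁ I₂ hdisj hu2 hv2
  have hl11 : c11 ≤ 1 := G_le_one μ X I₁ I₂ u₁ v₁
  have hl22 : c22 ≤ 1 := G_le_one μ X I₁ I₂ u₂ v₂
  set K := (Real.log c22) ^ 2 / c22 + (Real.log c11) ^ 2 / c11 with hK
  have hK0 : 0 ≤ K := by positivity
  have key : ∀ t : ℝ, 1 ≤ t →
      (Real.log c21 + Real.log c12) - (Real.log c22 + Real.log c11) ≤ K / t := by
    intro t ht
    have ht0 : 0 < t := lt_of_lt_of_le one_pos ht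
    have hz : ∀ (a b : ℝ), 0 < a → 0 < b →
        0 < G μ X I₁ I₂ (t * a) (t * b) ∧
        G μ X I₁ I₂ (t * a) (t * b) ^ t = G μ X I₁ I₂ a b := fun a b ha hb =>
      ⟨G_pos μ hX I₁ I₂ hdisj (mul_pos ht0 ha) (mul_pos ht0 hb),
       G_homog μ hX I₁ I₂ hdisj ht0 ha hb⟩
    obtain ⟨hz11p, hz11⟩ := hz u₁ v₁ hu1 hv1
    obtain ⟨hz12p, hz12⟩ := hz u₁ v₂ hu1 hv2
    obtain ⟨hz21p, hz21⟩ := hz u₂ v₁ hu2 hv1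
    obtain ⟨hz22p, hz22⟩ := hz u₂ v₂ hu2 hv2
    set z11 := G μ X I₁ I₂ (t * u₁) (t * v₁)
    set z12 := G μ X I₁ I₂ (t * u₁) (t * v₂)
    set z21 := G μ X I₁ I₂ (t * u₂) (t * v₁)
    set z22 := G μ X I₁ I₂ (t * u₂) (t * v₂)
    have hlog11 : Real.log c11 = t * Real.log z11 := by rw [hc11, ← hz11, Real.log_rpow hz11p]
    have hlog12 : Real.log c12 = t * Real.log z12 := by rw [hc12, ← hz12, Real.log_rpow hz12p]
    have hlog21 : Real.log c21 = t * Real.log z21 := by rw [hc21, ← hz21, Real.log_rpow hz21p]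
    have hlog22 : Real.log c22 = t * Real.log z22 := by rw [hc22, ← hz22, Real.log_rpow hz22p]
    have hsuper : z21 + z12 ≤ z22 + z11 :=
      G_supermod μ hX.meas I₁ I₂ (mul_le_mul_of_nonneg_left hu ht0.le)
        (mul_le_mul_of_nonneg_left hv ht0.le)
    have ha21 : Real.log z21 ≤ z21 - 1 := Real.log_le_sub_one_of_pos hz21p
    have ha12 : Real.log z12 ≤ z12 - 1 := Real.log_le_sub_one_of_pos hz12p
    have hb22 : z22 - 1 - Real.log z22 ≤ (Real.log c22) ^ 2 / (t ^ 2 * c22) :=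
      r_bound ht hp22 hl22 hz22p hz22
    have hb11 : z11 - 1 - Real.log z11 ≤ (Real.log c11) ^ 2 / (t ^ 2 * c11) :=
      r_bound ht hp11 hl11 hz11p hz11
    have hsum : Real.log z21 + Real.log z12 - Real.log z22 - Real.log z11 ≤
        (Real.log c22) ^ 2 / (t ^ 2 * c22) + (Real.log c11) ^ 2 / (t ^ 2 * c11) := by
      linarith
    have hKt : (Real.log c22) ^ 2 / (t ^ 2 * c22) + (Real.log c11) ^ 2 / (t ^ 2 * c11)
        = K / t ^ 2 := by
      rw [hK]
      field_simp
    rw [hKt] at hsum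
    have := mul_le_mul_of_nonneg_left hsum ht0.le
    calc (Real.log c21 + Real.log c12) - (Real.log c22 + Real.log c11)
        = t * (Real.log z21 + Real.log z12 - Real.log z22 - Real.log z11) := by
          rw [hlog11, hlog12, hlog21, hlog22]; ring
      _ ≤ t * (K / t ^ 2) := this
      _ = K / t := by
          field_simp
  have hfinal : (Real.log c21 + Real.log c12) - (Real.log c22 + Real.log c11) ≤ 0 := by
    refine le_of_forall_pos_le_add fun δ hδ => ?_
    have hM1 : (1:ℝ) ≤ max 1 (K / δ) := le_max_left _ _
    have hM0 : 0 < max 1 (K / δ) := lt_of_lt_of_le one_pos hM1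
    have h := key _ hM1
    have hKM : K / max 1 (K / δ) ≤ δ := by
      rw [div_le_iff₀ hM0]
      rcases le_or_gt K δ with h' | h'
      · calc K ≤ δ := h'
          _ ≤ δ * max 1 (K / δ) := le_mul_of_one_le_right hδ.le hM1
      · have : K / δ ≤ max 1 (K / δ) := le_max_right _ _
        calc K = δ * (K / δ) := by field_simp
          _ ≤ δ * max 1 (K / δ) := mul_le_mul_of_nonneg_left this hδ.le
    linarith
  linarith

/-- The sequence `n ↦ log G(u, n+1)` tends to `-ε₁/u`. -/
lemma tendsto_logG_snd (μ : Measure Ω) [IsProbabilityMeasure μ] {X : Fin d → Ω → ℝ}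
    (hX : IsMEVFrechet μ X) [Nonempty (Fin d)] (I₁ I₂ : Finset (Fin d)) {u : ℝ}
    (hu : 0 < u) :
    Tendsto (fun n : ℕ => Real.log (G μ X I₁ I₂ u ((n : ℝ) + 1))) atTop
      (𝓝 (-(extCoef μ X I₁) / u)) := by
  have ha : Monotone (fun n : ℕ => (n : ℝ) + 1) := fun m n hmn =>
    add_le_add_left (Nat.cast_le.2 hmn) _
  have hat : Tendsto (fun n : ℕ => (n : ℝ) + 1) atTop atTop :=
    tendsto_atTop_add_const_right atTop _ tendsto_natCast_atTop_atTop
  have h := tendsto_G_snd μ X I₁ I₂ ha hat u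
  have hgp : 0 < G μ X I₁ ∅ u 0 := by
    rw [G_marg μ hX I₁ hu]
    exact Real.exp_pos _
  have h2 := ((Real.continuousAt_log hgp.ne').tendsto).comp h
  have h3 : Real.log (G μ X I₁ ∅ u 0) = -(extCoef μ X I₁) / u := by
    rw [G_marg μ hX I₁ hu, Real.log_exp]
  rwa [h3] at h2

/-- Lipschitz-type bound in the second threshold. -/
lemma logG_lip_snd (μ : Measure Ω) [IsProbabilityMeasure μ] {X : Fin d → Ω → ℝ}
    (hX : IsMEVFrechet μ X) [Nonempty (Fin d)] (I₁ I₂ : Finset (Fin d))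
    (hdisj : Disjoint I₁ I₂) {u v₁ v₂ : ℝ} (hu : 0 < u) (hv1 : 0 < v₁) (hv : v₁ ≤ v₂) :
    Real.log (G μ X I₁ I₂ u v₂) - Real.log (G μ X I₁ I₂ u v₁) ≤
      extCoef μ X I₂ / v₁ - extCoef μ X I₂ / v₂ := by
  have hv2 : 0 < v₂ := lt_of_lt_of_le hv1 hv
  have hcomm : ∀ w a : ℝ, G μ X I₁ I₂ a w = G μ X I₂ I₁ w a := fun w a =>
    G_comm μ X I₂ I₁ w a
  have hlim2 : Tendsto (fun n : ℕ => Real.log (G μ X I₁ I₂ ((n:ℝ) + 1) v₂)) atTop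
      (𝓝 (-(extCoef μ X I₂) / v₂)) := by
    simp only [hcomm v₂]
    exact tendsto_logG_snd μ hX I₂ I₁ hv2
  have hlim1 : Tendsto (fun n : ℕ => Real.log (G μ X I₁ I₂ ((n:ℝ) + 1) v₁)) atTop
      (𝓝 (-(extCoef μ X I₂) / v₁)) := by
    simp only [hcomm v₁]
    exact tendsto_logG_snd μ hX I₂ I₁ hv1
  have hev : ∀ᶠ n : ℕ in atTop,
      Real.log (G μ X I₁ I₂ u v₂) - Real.log (G μ X I₁ I₂ u v₁) ≤
        Real.log (G μ X I₁ I₂ ((n:ℝ) + 1) v₂) - Real.log (G μ X I₁ I₂ ((n:ℝ) + 1) v₁) := by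
    filter_upwards [eventually_ge_atTop ⌈u⌉₊] with n hn
    have hun : u ≤ (n : ℝ) + 1 := by
      calc u ≤ (⌈u⌉₊ : ℝ) := Nat.le_ceil u
        _ ≤ (n : ℝ) := Nat.cast_le.2 hn
        _ ≤ (n : ℝ) + 1 := by linarith
    have := logG_supermod μ hX I₁ I₂ hdisj hu hun hv1 hv
    linarith
  have hlim := hlim2.sub hlim1
  have heq : -extCoef μ X I₂ / v₂ - -extCoef μ X I₂ / v₁
      = extCoef μ X I₂ / v₁ - extCoef μ X I₂ / v₂ := by ring
  rw [heq] at hlim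
  exact ge_of_tendsto hlim hev

/-- Lipschitz-type bound in the first threshold. -/
lemma logG_lip_fst (μ : Measure Ω) [IsProbabilityMeasure μ] {X : Fin d → Ω → ℝ}
    (hX : IsMEVFrechet μ X) [Nonempty (Fin d)] (I₁ I₂ : Finset (Fin d))
    (hdisj : Disjoint I₁ I₂) {v u₁ u₂ : ℝ} (hv : 0 < v) (hu1 : 0 < u₁) (hu : u₁ ≤ u₂) :
    Real.log (G μ X I₁ I₂ u₂ v) - Real.log (G μ X I₁ I₂ u₁ v) ≤
      extCoef μ X I₁ / u₁ - extCoef μ X I₁ / u₂ := by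
  have h := logG_lip_snd μ hX I₂ I₁ hdisj.symm hv hu1 hu
  rwa [G_comm μ X I₁ I₂, G_comm μ X I₁ I₂] at h

/-- Lower bound: `-ε₁/u - ε₂/v ≤ log G(u,v)`. -/
lemma logG_lower (μ : Measure Ω) [IsProbabilityMeasure μ] {X : Fin d → Ω → ℝ}
    (hX : IsMEVFrechet μ X) [Nonempty (Fin d)] (I₁ I₂ : Finset (Fin d))
    (hdisj : Disjoint I₁ I₂) {u v : ℝ} (hu : 0 < u) (hv : 0 < v) :
    -(extCoef μ X I₁) / u - extCoef μ X I₂ / v ≤ Real.log (G μ X I₁ I₂ u v) := by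
  have hcomm : ∀ w a : ℝ, G μ X I₁ I₂ a w = G μ X I₂ I₁ w a := fun w a =>
    G_comm μ X I₂ I₁ w a
  have hlim : Tendsto
      (fun n : ℕ => Real.log (G μ X I₁ I₂ ((n:ℝ) + 1) v) - extCoef μ X I₁ / u) atTop
      (𝓝 (-(extCoef μ X I₂) / v - extCoef μ X I₁ / u)) := by
    refine Tendsto.sub_const ?_ _
    simp only [hcomm v]
    exact tendsto_logG_snd μ hX I₂ I₁ hv
  have hev : ∀ᶠ n : ℕ in atTop,
      Real.log (G μ X I₁ I₂ ((n:ℝ) + 1) v) - extCoef μ X I₁ / u ≤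
        Real.log (G μ X I₁ I₂ u v) := by
    filter_upwards [eventually_ge_atTop ⌈u⌉₊] with n hn
    have hun : u ≤ (n : ℝ) + 1 := by
      calc u ≤ (⌈u⌉₊ : ℝ) := Nat.le_ceil u
        _ ≤ (n : ℝ) := Nat.cast_le.2 hn
        _ ≤ (n : ℝ) + 1 := by linarith
    have h1 := logG_lip_fst μ hX I₁ I₂ hdisj hv hu hun
    have h2 : 0 ≤ extCoef μ X I₁ / ((n:ℝ) + 1) :=
      div_nonneg (extCoef_nonneg μ X I₁) (by positivity)
    linarith
  have := le_of_tendsto hlim hev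
  linarith [this, neg_div u (extCoef μ X I₁), neg_div v (extCoef μ X I₂)]

/-- Upper bound by the second marginal: `log G(u,v) ≤ -ε₂/v`. -/
lemma logG_le_marg_snd (μ : Measure Ω) [IsProbabilityMeasure μ] {X : Fin d → Ω → ℝ}
    (hX : IsMEVFrechet μ X) [Nonempty (Fin d)] (I₁ I₂ : Finset (Fin d))
    (hdisj : Disjoint I₁ I₂) {u v : ℝ} (hu : 0 < u) (hv : 0 < v) :
    Real.log (G μ X I₁ I₂ u v) ≤ -(extCoef μ X I₂) / v := by
  have hsub : S X I₁ I₂ u v ⊆ S X I₂ ∅ v 0 := by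
    rintro ω ⟨-, h2⟩
    exact ⟨h2, by simp⟩
  have hle : G μ X I₁ I₂ u v ≤ G μ X I₂ ∅ v 0 :=
    ENNReal.toReal_mono (measure_ne_top μ _) (measure_mono hsub)
  have hpos : 0 < G μ X I₁ I₂ u v := G_pos μ hX I₁ I₂ hdisj hu hv
  calc Real.log (G μ X I₁ I₂ u v) ≤ Real.log (G μ X I₂ ∅ v 0) :=
        Real.log_le_log hpos hle
    _ = -(extCoef μ X I₂) / v := by rw [G_marg μ hX I₂ hv, Real.log_exp]

lemma lambdaU_comm (μ : Measure Ω) (X : Fin d → Ω → ℝ) (I₁ I₂ : Finset (Fin d)) (x y : ℝ) :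
    lambdaU μ X I₁ I₂ x y = lambdaU μ X I₂ I₁ y x := by
  have hs : {ω | (∀ j ∈ I₂, X j ω ≤ y⁻¹) ∧ (∀ i ∈ I₁, X i ω ≤ x⁻¹)} =
      {ω | (∀ i ∈ I₁, X i ω ≤ x⁻¹) ∧ (∀ j ∈ I₂, X j ω ≤ y⁻¹)} := by
    ext ω; exact and_comm
  unfold lambdaU mevL
  rw [hs]
  rcases Classical.em (x ≤ 0 ∨ y ≤ 0) with h | h
  · rw [if_pos h, if_pos h.symm]
  · rw [if_neg h, if_neg fun hc => h hc.symm]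
    ring

lemma lambdaU_pos_eq (μ : Measure Ω) (X : Fin d → Ω → ℝ) (I₁ I₂ : Finset (Fin d))
    {x y : ℝ} (hx : 0 < x) (hy : 0 < y) :
    lambdaU μ X I₁ I₂ x y = x * extCoef μ X I₁ + y * extCoef μ X I₂
      + Real.log (G μ X I₁ I₂ x⁻¹ y⁻¹) := by
  unfold lambdaU
  rw [if_neg (by push_neg; exact ⟨hx, hy⟩), mevL_eq]
  ring

lemma lambdaU_zero (μ : Measure Ω) (X : Fin d → Ω → ℝ) (I₁ I₂ : Finset (Fin d))
    {x y : ℝ} (h : x ≤ 0 ∨ y ≤ 0) : lambdaU μ X I₁ I₂ x y = 0 := by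
  unfold lambdaU
  rw [if_pos h]

lemma lam_nonneg (μ : Measure Ω) [IsProbabilityMeasure μ] {X : Fin d → Ω → ℝ}
    (hX : IsMEVFrechet μ X) [Nonempty (Fin d)] (I₁ I₂ : Finset (Fin d))
    (hdisj : Disjoint I₁ I₂) (x y : ℝ) : 0 ≤ lambdaU μ X I₁ I₂ x y := by
  rcases le_or_gt x 0 with hx | hx
  · rw [lambdaU_zero μ X I₁ I₂ (Or.inl hx)]
  rcases le_or_gt y 0 with hy | hy
  · rw [lambdaU_zero μ X I₁ I₂ (Or.inr hy)]
  rw [lambdaU_pos_eq μ X I₁ I₂ hx hy]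
  have h := logG_lower μ hX I₁ I₂ hdisj (inv_pos.2 hx) (inv_pos.2 hy)
  rw [div_inv_eq_mul, div_inv_eq_mul] at h
  have h1 : -extCoef μ X I₁ * x = -(extCoef μ X I₁ * x) := by ring
  rw [h1] at h
  nlinarith [h]

lemma lam_le (μ : Measure Ω) [IsProbabilityMeasure μ] {X : Fin d → Ω → ℝ}
    (hX : IsMEVFrechet μ X) [Nonempty (Fin d)] (I₁ I₂ : Finset (Fin d))
    (hdisj : Disjoint I₁ I₂) {x y : ℝ} (hx : 0 < x) (hy : 0 < y) :
    lambdaU μ X I₁ I₂ x y ≤ x * extCoef μ X I₁ := by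
  rw [lambdaU_pos_eq μ X I₁ I₂ hx hy]
  have h := logG_le_marg_snd μ hX I₁ I₂ hdisj (inv_pos.2 hx) (inv_pos.2 hy)
  rw [div_inv_eq_mul] at h
  have h1 : -extCoef μ X I₂ * y = -(extCoef μ X I₂ * y) := by ring
  rw [h1] at h
  nlinarith [h]

lemma lam_mono_x (μ : Measure Ω) [IsProbabilityMeasure μ] {X : Fin d → Ω → ℝ}
    (hX : IsMEVFrechet μ X) [Nonempty (Fin d)] (I₁ I₂ : Finset (Fin d))
    (hdisj : Disjoint I₁ I₂) (y : ℝ) : Monotone (fun x => lambdaU μ X I₁ I₂ x y) := by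
  intro x₁ x₂ hx
  simp only
  rcases le_or_gt y 0 with hy | hy
  · rw [lambdaU_zero μ X I₁ I₂ (Or.inr hy), lambdaU_zero μ X I₁ I₂ (Or.inr hy)]
  rcases le_or_gt x₂ 0 with h2 | h2
  · rw [lambdaU_zero μ X I₁ I₂ (Or.inl (hx.trans h2)), lambdaU_zero μ X I₁ I₂ (Or.inl h2)]
  rcases le_or_gt x₁ 0 with h1 | h1
  · rw [lambdaU_zero μ X I₁ I₂ (Or.inl h1)]
    exact lam_nonneg μ hX I₁ I₂ hdisj x₂ y
  · rw [lambdaU_pos_eq μ X I₁ I₂ h1 hy, lambdaU_pos_eq μ X I₁ I₂ h2 hy]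
    have hinv : x₂⁻¹ ≤ x₁⁻¹ := by
      apply inv_anti₀ h1 hx
    have key := logG_lip_fst μ hX I₁ I₂ hdisj (v := y⁻¹) (inv_pos.2 hy)
      (inv_pos.2 h2) hinv
    rw [div_inv_eq_mul, div_inv_eq_mul] at key
    nlinarith [key]

lemma lam_lip_x (μ : Measure Ω) [IsProbabilityMeasure μ] {X : Fin d → Ω → ℝ}
    (hX : IsMEVFrechet μ X) [Nonempty (Fin d)] (I₁ I₂ : Finset (Fin d))
    (hdisj : Disjoint I₁ I₂) (y : ℝ) {x₁ x₂ : ℝ} (hx : x₁ ≤ x₂) :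
    lambdaU μ X I₁ I₂ x₂ y - lambdaU μ X I₁ I₂ x₁ y ≤ extCoef μ X I₁ * (x₂ - x₁) := by
  have he1 : 0 ≤ extCoef μ X I₁ := extCoef_nonneg μ X I₁
  rcases le_or_gt y 0 with hy | hy
  · rw [lambdaU_zero μ X I₁ I₂ (Or.inr hy), lambdaU_zero μ X I₁ I₂ (Or.inr hy)]
    nlinarith
  rcases le_or_gt x₂ 0 with h2 | h2
  · rw [lambdaU_zero μ X I₁ I₂ (Or.inl (hx.trans h2)), lambdaU_zero μ X I₁ I₂ (Or.inl h2)]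
    nlinarith
  rcases le_or_gt x₁ 0 with h1 | h1
  · rw [lambdaU_zero μ X I₁ I₂ (Or.inl h1)]
    have := lam_le μ hX I₁ I₂ hdisj h2 hy
    nlinarith
  · rw [lambdaU_pos_eq μ X I₁ I₂ h1 hy, lambdaU_pos_eq μ X I₁ I₂ h2 hy]
    have hinv : x₂⁻¹ ≤ x₁⁻¹ := inv_anti₀ h1 hx
    have hmono : G μ X I₁ I₂ x₂⁻¹ y⁻¹ ≤ G μ X I₁ I₂ x₁⁻¹ y⁻¹ :=
      G_mono μ X I₁ I₂ hinv le_rfl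
    have hpos : 0 < G μ X I₁ I₂ x₂⁻¹ y⁻¹ :=
      G_pos μ hX I₁ I₂ hdisj (inv_pos.2 h2) (inv_pos.2 hy)
    have hlog := Real.log_le_log hpos hmono
    nlinarith [hlog]

lemma lam_supermod (μ : Measure Ω) [IsProbabilityMeasure μ] {X : Fin d → Ω → ℝ}
    (hX : IsMEVFrechet μ X) [Nonempty (Fin d)] (I₁ I₂ : Finset (Fin d))
    (hdisj : Disjoint I₁ I₂) {x₁ x₂ y₁ y₂ : ℝ} (hx : x₁ ≤ x₂) (hy : y₁ ≤ y₂) :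
    lambdaU μ X I₁ I₂ x₂ y₁ + lambdaU μ X I₁ I₂ x₁ y₂ ≤
      lambdaU μ X I₁ I₂ x₂ y₂ + lambdaU μ X I₁ I₂ x₁ y₁ := by
  rcases le_or_gt y₁ 0 with hy1 | hy1
  · rw [lambdaU_zero μ X I₁ I₂ (Or.inr hy1), lambdaU_zero μ X I₁ I₂ (Or.inr hy1)]
    have := lam_mono_x μ hX I₁ I₂ hdisj y₂ hx
    simpa using by linarith [this]
  rcases le_or_gt x₁ 0 with hx1 | hx1
  · rw [lambdaU_zero μ X I₁ I₂ (Or.inl hx1), lambdaU_zero μ X I₁ I₂ (Or.inl hx1)]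
    -- need : lambdaU x₂ y₁ ≤ lambdaU x₂ y₂ : monotone in y via comm
    rw [lambdaU_comm μ X I₁ I₂ x₂ y₁, lambdaU_comm μ X I₁ I₂ x₂ y₂]
    have := lam_mono_x μ hX I₂ I₁ hdisj.symm x₂ hy
    simpa using by linarith [this]
  · have hx2 : 0 < x₂ := lt_of_lt_of_le hx1 hx
    have hy2 : 0 < y₂ := lt_of_lt_of_le hy1 hy
    rw [lambdaU_pos_eq μ X I₁ I₂ hx2 hy1, lambdaU_pos_eq μ X I₁ I₂ hx1 hy2,
      lambdaU_pos_eq μ X I₁ I₂ hx2 hy2, lambdaU_pos_eq μ X I₁ I₂ hx1 hy1]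
    have key := logG_supermod μ hX I₁ I₂ hdisj (u₁ := x₂⁻¹) (u₂ := x₁⁻¹)
      (v₁ := y₂⁻¹) (v₂ := y₁⁻¹) (inv_pos.2 hx2) (inv_anti₀ hx1 hx)
      (inv_pos.2 hy2) (inv_anti₀ hy1 hy)
    linarith [key]

/-- The derivative of a monotone function is nonnegative. -/
lemma deriv_nonneg_of_mono {f : ℝ → ℝ} (hf : Monotone f) {c x : ℝ}
    (h : HasDerivAt f c x) : 0 ≤ c := by
  rw [hasDerivAt_iff_tendsto_slope] at h
  have h' : Tendsto (slope f x) (𝓝[>] x) (𝓝 c) :=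
    h.mono_left (nhdsWithin_mono x fun z hz => Set.mem_compl_singleton_iff.2 (ne_of_gt hz))
  refine ge_of_tendsto h' ?_
  filter_upwards [self_mem_nhdsWithin] with z hz
  rw [slope_def_field]
  exact div_nonneg (sub_nonneg.2 (hf (le_of_lt hz))) (sub_nonneg.2 (le_of_lt hz))

/-- The derivative of a `K`-Lipschitz-above function is at most `K`. -/
lemma deriv_le_of_lip {f : ℝ → ℝ} {K : ℝ}
    (hf : ∀ a b : ℝ, a ≤ b → f b - f a ≤ K * (b - a)) {c x : ℝ}
    (h : HasDerivAt f c x) : c ≤ K := by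
  rw [hasDerivAt_iff_tendsto_slope] at h
  have h' : Tendsto (slope f x) (𝓝[>] x) (𝓝 c) :=
    h.mono_left (nhdsWithin_mono x fun z hz => Set.mem_compl_singleton_iff.2 (ne_of_gt hz))
  refine le_of_tendsto h' ?_
  filter_upwards [self_mem_nhdsWithin] with z hz
  rw [slope_def_field]
  rw [div_le_iff₀ (sub_pos.2 hz)]
  exact hf x z (le_of_lt hz)

lemma masterA (μ : Measure Ω) [IsProbabilityMeasure μ] {X : Fin d → Ω → ℝ}
    (hX : IsMEVFrechet μ X) (I₁ I₂ : Finset (Fin d)) (h1 : I₁.Nonempty)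
    (hdisj : Disjoint I₁ I₂) :
    ∀ y : ℝ, 0 ≤ y →
      ∀ᵐ x ∂(volume.restrict (Set.Ioi (0 : ℝ))),
        ∃ c : ℝ, HasDerivAt (fun s => lambdaU μ X I₁ I₂ s y) c x ∧
          0 ≤ c ∧ c ≤ (I₁.card : ℝ) := by
  intro y _
  haveI : Nonempty (Fin d) := ⟨h1.choose⟩
  have hmono : Monotone (fun s => lambdaU μ X I₁ I₂ s y) := lam_mono_x μ hX I₁ I₂ hdisj y
  have hlip : ∀ a b : ℝ, a ≤ b →
      (fun s => lambdaU μ X I₁ I₂ s y) b - (fun s => lambdaU μ X I₁ I₂ s y) a ≤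
        extCoef μ X I₁ * (b - a) := fun a b hab => lam_lip_x μ hX I₁ I₂ hdisj y hab
  refine ae_restrict_of_ae ?_
  filter_upwards [hmono.ae_differentiableAt] with x hx
  refine ⟨deriv (fun s => lambdaU μ X I₁ I₂ s y) x, hx.hasDerivAt,
    deriv_nonneg_of_mono hmono hx.hasDerivAt, ?_⟩
  exact (deriv_le_of_lip hlip hx.hasDerivAt).trans (extCoef_le_card μ hX I₁ h1)

lemma masterB (μ : Measure Ω) [IsProbabilityMeasure μ] {X : Fin d → Ω → ℝ}
    (hX : IsMEVFrechet μ X) (I₁ I₂ : Finset (Fin d)) (h1 : I₁.Nonempty)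
    (hdisj : Disjoint I₁ I₂) :
    ∀ y₁ y₂ : ℝ, 0 ≤ y₁ → y₁ ≤ y₂ →
      ∀ᵐ x ∂(volume.restrict (Set.Ioi (0 : ℝ))),
        DifferentiableAt ℝ (fun s => lambdaU μ X I₁ I₂ s y₁) x ∧
        DifferentiableAt ℝ (fun s => lambdaU μ X I₁ I₂ s y₂) x ∧
        deriv (fun s => lambdaU μ X I₁ I₂ s y₁) x
          ≤ deriv (fun s => lambdaU μ X I₁ I₂ s y₂) x := by
  intro y₁ y₂ _ hy
  haveI : Nonempty (Fin d) := ⟨h1.choose⟩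
  have hm1 : Monotone (fun s => lambdaU μ X I₁ I₂ s y₁) := lam_mono_x μ hX I₁ I₂ hdisj y₁
  have hm2 : Monotone (fun s => lambdaU μ X I₁ I₂ s y₂) := lam_mono_x μ hX I₁ I₂ hdisj y₂
  have hψ : Monotone (fun s => lambdaU μ X I₁ I₂ s y₂ - lambdaU μ X I₁ I₂ s y₁) := by
    intro a b hab
    have := lam_supermod μ hX I₁ I₂ hdisj hab hy
    simp only
    linarith
  refine ae_restrict_of_ae ?_
  filter_upwards [hm1.ae_differentiableAt, hm2.ae_differentiableAt] with x hx1 hx2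
  refine ⟨hx1, hx2, ?_⟩
  have hd : HasDerivAt (fun s => lambdaU μ X I₁ I₂ s y₂ - lambdaU μ X I₁ I₂ s y₁)
      (deriv (fun s => lambdaU μ X I₁ I₂ s y₂) x -
        deriv (fun s => lambdaU μ X I₁ I₂ s y₁) x) x :=
    hx2.hasDerivAt.sub hx1.hasDerivAt
  have := deriv_nonneg_of_mono hψ hd
  linarith

end St7Aux

open St7Aux in
/-- (i) For each `y ≥ 0`, `∂Λ_U/∂x(·,y)` exists for (Lebesgue-) almost
all `x > 0` and lies in `[0, |I₁|]`; (ii) symmetrically in `y` with bound `|I₂|`;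
(iii) the functions `x ↦ ∂Λ_U/∂y(x,y)` and `y ↦ ∂Λ_U/∂x(x,y)` are defined and
non-decreasing almost everywhere on `[0,∞)`. -/
theorem statement7 {Ω : Type*} [MeasurableSpace Ω] (μ : Measure Ω) [IsProbabilityMeasure μ]
    {d : ℕ} (X : Fin d → Ω → ℝ) (hX : IsMEVFrechet μ X)
    (I₁ I₂ : Finset (Fin d)) (h1 : I₁.Nonempty) (h2 : I₂.Nonempty) (hdisj : Disjoint I₁ I₂) :
    (∀ y : ℝ, 0 ≤ y →
      ∀ᵐ x ∂(volume.restrict (Set.Ioi (0 : ℝ))),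
        ∃ c : ℝ, HasDerivAt (fun s => lambdaU μ X I₁ I₂ s y) c x ∧
          0 ≤ c ∧ c ≤ (I₁.card : ℝ)) ∧
    (∀ x : ℝ, 0 ≤ x →
      ∀ᵐ y ∂(volume.restrict (Set.Ioi (0 : ℝ))),
        ∃ c : ℝ, HasDerivAt (fun s => lambdaU μ X I₁ I₂ x s) c y ∧
          0 ≤ c ∧ c ≤ (I₂.card : ℝ)) ∧
    (∀ x₁ x₂ : ℝ, 0 ≤ x₁ → x₁ ≤ x₂ →
      ∀ᵐ y ∂(volume.restrict (Set.Ioi (0 : ℝ))),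
        DifferentiableAt ℝ (fun s => lambdaU μ X I₁ I₂ x₁ s) y ∧
        DifferentiableAt ℝ (fun s => lambdaU μ X I₁ I₂ x₂ s) y ∧
        deriv (fun s => lambdaU μ X I₁ I₂ x₁ s) y
          ≤ deriv (fun s => lambdaU μ X I₁ I₂ x₂ s) y) ∧
    (∀ y₁ y₂ : ℝ, 0 ≤ y₁ → y₁ ≤ y₂ →
      ∀ᵐ x ∂(volume.restrict (Set.Ioi (0 : ℝ))),
        DifferentiableAt ℝ (fun s => lambdaU μ X I₁ I₂ s y₁) x ∧
        DifferentiableAt ℝ (fun s => lambdaU μ X I₁ I₂ s y₂) x ∧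
        deriv (fun s => lambdaU μ X I₁ I₂ s y₁) x
          ≤ deriv (fun s => lambdaU μ X I₁ I₂ s y₂) x) := by
  refine ⟨masterA μ hX I₁ I₂ h1 hdisj, ?_, ?_, masterB μ hX I₁ I₂ h1 hdisj⟩
  · intro x hx
    have hfe : ∀ x : ℝ, (fun s => lambdaU μ X I₁ I₂ x s) = (fun s => lambdaU μ X I₂ I₁ s x) :=
      fun x => funext fun s => lambdaU_comm μ X I₁ I₂ x s
    rw [hfe]
    exact masterA μ hX I₂ I₁ h2 hdisj.symm x hx
  · intro x₁ x₂ hx1 hx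
    have hfe : ∀ x : ℝ, (fun s => lambdaU μ X I₁ I₂ x s) = (fun s => lambdaU μ X I₂ I₁ s x) :=
      fun x => funext fun s => lambdaU_comm μ X I₁ I₂ x s
    rw [hfe, hfe]
    exact masterB μ hX I₂ I₁ h2 hdisj.symm x₁ x₂ hx1 hx
end

section
/- Let X = (X₁,…,X_d) be a random vector with continuous marginal distribution functions F₁,…,F_d and let I₁, I₂ be disjoint non-empty subsets of {1,…,d}. Assume that for all non-empty I ⊆ I₁ and non-empty J ⊆ I₂ there exist η_{I,J} ∈ (0,1] and a function L_{I,J} slowly varying at ∞ such that P( min_{i∈I, j∈J}( F_i(X_i), F_j(X_j) ) > 1 − 1/t ) = t^{-1/η_{I,J}} L_{I,J}(t) for all t, and assume that there exist η_{(I₁,I₂)} ∈ (0,1] and a function L_{(I₁,I₂)} slowly varying at ∞ with P( M(I₁) > 1 − 1/t, M(I₂) > 1 − 1/t ) = t^{-1/η_{(I₁,I₂)}} L_{(I₁,I₂)}(t). Then η_{(I₁,I₂)} = max{ η_{{i},{j}} : i ∈ I₁, j ∈ I₂ }. -/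
open MeasureTheory Filter Finset

/-- `L` is slowly varying at `∞`: `L(tx)/L(t) → 1` as `t → ∞` for every `x > 0`. -/
def SlowlyVarying (L : ℝ → ℝ) : Prop :=
  ∀ x : ℝ, 0 < x → Tendsto (fun t => L (t * x) / L t) atTop (nhds 1)

lemma ratio_blowup (f g : ℝ → ℝ) (x c : ℝ) (hx : 1 < x) (hc : 1 < c)
    (hpos : ∀ᶠ t in atTop, 0 < f t ∧ 0 < g t ∧ f t ≤ g t)
    (hstep : ∀ᶠ t in atTop, c * (f t / g t) ≤ f (t * x) / g (t * x)) : False := by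
  rw [eventually_atTop] at hpos hstep
  obtain ⟨T₁, h₁⟩ := hpos
  obtain ⟨T₂, h₂⟩ := hstep
  set T := max 1 (max T₁ T₂) with hT
  have hT1 : (1:ℝ) ≤ T := le_max_left _ _
  have hTT₁ : T₁ ≤ T := le_trans (le_max_left _ _) (le_max_right _ _)
  have hTT₂ : T₂ ≤ T := le_trans (le_max_right _ _) (le_max_right _ _)
  have key : ∀ n : ℕ, T ≤ T * x ^ n ∧
      c ^ n * (f T / g T) ≤ f (T * x ^ n) / g (T * x ^ n) := by
    intro n
    induction n with
    | zero => simp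
    | succ n ih =>
      obtain ⟨hle, hquot⟩ := ih
      have hTpos : (0:ℝ) < T := lt_of_lt_of_le one_pos hT1
      have hpow : (0:ℝ) < T * x ^ n := by positivity
      have h1 : T ≤ T * x ^ (n+1) := by
        calc T ≤ T * x ^ n := hle
        _ ≤ T * x ^ n * x := le_mul_of_one_le_right hpow.le hx.le
        _ = T * x ^ (n+1) := by ring
      refine ⟨h1, ?_⟩
      have hstep' := h₂ (T * x ^ n) (le_trans hTT₂ hle)
      have : T * x ^ (n+1) = (T * x ^ n) * x := by ring
      rw [this]
      calc c ^ (n+1) * (f T / g T) = c * (c ^ n * (f T / g T)) := by ring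
        _ ≤ c * (f (T * x ^ n) / g (T * x ^ n)) :=
            mul_le_mul_of_nonneg_left hquot (by linarith)
        _ ≤ f (T * x ^ n * x) / g (T * x ^ n * x) := hstep'
  have hfg := h₁ T hTT₁
  have hr : 0 < f T / g T := div_pos hfg.1 hfg.2.1
  obtain ⟨n, hn⟩ :=
    ((tendsto_pow_atTop_atTop_of_one_lt hc).eventually_gt_atTop (1 / (f T / g T))).exists
  obtain ⟨hle, hquot⟩ := key n
  have hfg' := h₁ (T * x ^ n) (le_trans hTT₁ hle)
  have hle1 : f (T * x ^ n) / g (T * x ^ n) ≤ 1 := div_le_one_of_le₀ hfg'.2.2 hfg'.2.1.le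
  have h1lt : 1 < c ^ n * (f T / g T) := (div_lt_iff₀ hr).mp hn
  linarith

lemma rv_compare (a b : ℝ) (hab : a < b) (f g : ℝ → ℝ)
    (hfg : ∀ᶠ t in atTop, 0 < f t ∧ 0 < g t ∧ f t ≤ g t)
    (hf : ∀ x : ℝ, 1 < x → ∀ᶠ t in atTop, (3/4) * x ^ (-a) * f t ≤ f (t * x))
    (hg : ∀ x : ℝ, 1 < x → ∀ᶠ t in atTop, g (t * x) ≤ (4/3) * x ^ (-b) * g t) : False := by
  obtain ⟨x, hx4, hx1⟩ :=
    (((tendsto_rpow_atTop (by linarith : (0:ℝ) < b - a)).eventually_ge_atTop 4).and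
      (eventually_gt_atTop 1)).exists
  have hx0 : (0:ℝ) < x := lt_trans one_pos hx1
  have hmul : Tendsto (fun t : ℝ => t * x) atTop atTop :=
    Tendsto.atTop_mul_const hx0 tendsto_id
  have hfgx : ∀ᶠ t in atTop, 0 < f (t * x) ∧ 0 < g (t * x) ∧ f (t * x) ≤ g (t * x) :=
    hmul.eventually hfg
  refine ratio_blowup f g x (9/4) hx1 (by norm_num) hfg ?_
  filter_upwards [hfg, hfgx, hf x hx1, hg x hx1] with t ⟨hf0, hg0, _⟩ ⟨hfx0, hgx0, _⟩ hlow hupp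
  have hxa : (0:ℝ) < x ^ (-a) := Real.rpow_pos_of_pos hx0 _
  have hxb : (0:ℝ) < x ^ (-b) := Real.rpow_pos_of_pos hx0 _
  have hdiv : (3/4 * x ^ (-a) * f t) / (4/3 * x ^ (-b) * g t) ≤ f (t * x) / g (t * x) :=
    div_le_div₀ hfx0.le hlow (by positivity) hupp
  have hxab : x ^ (-a) / x ^ (-b) = x ^ (b - a) := by
    rw [← Real.rpow_sub hx0]; ring_nf
  have heq : (3/4 * x ^ (-a) * f t) / (4/3 * x ^ (-b) * g t)
      = (3/4)/(4/3) * (x ^ (-a) / x ^ (-b)) * (f t / g t) := by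
    field_simp
  rw [heq, hxab] at hdiv
  have hr : 0 ≤ f t / g t := by positivity
  nlinarith [mul_le_mul_of_nonneg_right hx4 hr]

lemma sv_lower (a : ℝ) (L : ℝ → ℝ) (hL : SlowlyVarying L) (hLpos : ∀ t, 0 < t → 0 < L t)
    (x : ℝ) (hx : 1 < x) :
    ∀ᶠ t in atTop, (3/4) * x ^ (-a) * (t ^ (-a) * L t) ≤ (t * x) ^ (-a) * L (t * x) := by
  have hx0 : (0:ℝ) < x := lt_trans one_pos hx
  have h34 : ∀ᶠ t in atTop, (3/4:ℝ) < L (t * x) / L t :=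
    (hL x hx0).eventually (eventually_gt_nhds (by norm_num))
  filter_upwards [h34, eventually_gt_atTop 0] with t hrat ht0
  have hLt : 0 < L t := hLpos t ht0
  have hLb : (3/4) * L t < L (t * x) := (lt_div_iff₀ hLt).mp hrat
  have hmr : (t * x) ^ (-a) = t ^ (-a) * x ^ (-a) := Real.mul_rpow ht0.le hx0.le
  rw [hmr]
  calc (3/4) * x ^ (-a) * (t ^ (-a) * L t) = (t ^ (-a) * x ^ (-a)) * (3/4 * L t) := by ring
    _ ≤ (t ^ (-a) * x ^ (-a)) * L (t * x) := by
        have hP : (0:ℝ) ≤ t ^ (-a) * x ^ (-a) := by positivity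
        exact mul_le_mul_of_nonneg_left hLb.le hP

lemma sv_upper (a : ℝ) (L : ℝ → ℝ) (hL : SlowlyVarying L) (hLpos : ∀ t, 0 < t → 0 < L t)
    (x : ℝ) (hx : 1 < x) :
    ∀ᶠ t in atTop, (t * x) ^ (-a) * L (t * x) ≤ (4/3) * x ^ (-a) * (t ^ (-a) * L t) := by
  have hx0 : (0:ℝ) < x := lt_trans one_pos hx
  have h43 : ∀ᶠ t in atTop, L (t * x) / L t < (4/3:ℝ) :=
    (hL x hx0).eventually (eventually_lt_nhds (by norm_num))
  filter_upwards [h43, eventually_gt_atTop 0] with t hrat ht0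
  have hLt : 0 < L t := hLpos t ht0
  have hLb : L (t * x) < (4/3) * L t := by
    have := (div_lt_iff₀ hLt).mp hrat; linarith
  have hmr : (t * x) ^ (-a) = t ^ (-a) * x ^ (-a) := Real.mul_rpow ht0.le hx0.le
  rw [hmr]
  calc (t ^ (-a) * x ^ (-a)) * L (t * x) ≤ (t ^ (-a) * x ^ (-a)) * (4/3 * L t) := by
        have hP : (0:ℝ) ≤ t ^ (-a) * x ^ (-a) := by positivity
        exact mul_le_mul_of_nonneg_left hLb.le hP
    _ = (4/3) * x ^ (-a) * (t ^ (-a) * L t) := by ring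
/-- If `P(min_{i∈I,j∈J}(F_i(X_i),F_j(X_j)) > 1 - 1/t) = t^{-1/η_{I,J}} L_{I,J}(t)`
regularly varying for all non-empty `I ⊆ I₁`, `J ⊆ I₂`, and
`P(M(I₁) > 1 - 1/t, M(I₂) > 1 - 1/t) = t^{-1/η_{(I₁,I₂)}} L_{(I₁,I₂)}(t)`, then
`η_{(I₁,I₂)} = max{η_{{i},{j}} : i ∈ I₁, j ∈ I₂}`. -/
theorem statement10 {Ω : Type*} [MeasurableSpace Ω] (μ : Measure Ω) [IsProbabilityMeasure μ]
    {d : ℕ} (X : Fin d → Ω → ℝ) (hmeas : ∀ i, Measurable (X i))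
    (hcont : ∀ i, Continuous (margCDF μ X i))
    (I₁ I₂ : Finset (Fin d)) (h1 : I₁.Nonempty) (h2 : I₂.Nonempty) (hdisj : Disjoint I₁ I₂)
    (η : Finset (Fin d) → Finset (Fin d) → ℝ)
    (L : Finset (Fin d) → Finset (Fin d) → ℝ → ℝ)
    (hη : ∀ I ⊆ I₁, ∀ J ⊆ I₂, I.Nonempty → J.Nonempty → 0 < η I J ∧ η I J ≤ 1)
    (hLpos : ∀ I ⊆ I₁, ∀ J ⊆ I₂, I.Nonempty → J.Nonempty → ∀ t : ℝ, 0 < t → 0 < L I J t)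
    (hLsv : ∀ I ⊆ I₁, ∀ J ⊆ I₂, I.Nonempty → J.Nonempty → SlowlyVarying (L I J))
    (hreg : ∀ I, I ⊆ I₁ → ∀ J, J ⊆ I₂ → I.Nonempty → J.Nonempty → ∀ t : ℝ, 0 < t →
      (μ {ω | ∀ k ∈ I ∪ J, 1 - 1 / t < margCDF μ X k (X k ω)}).toReal
        = t ^ (-(η I J)⁻¹) * L I J t)
    (η₀ : ℝ) (L₀ : ℝ → ℝ) (hη₀ : 0 < η₀ ∧ η₀ ≤ 1)
    (hL₀pos : ∀ t : ℝ, 0 < t → 0 < L₀ t) (hL₀sv : SlowlyVarying L₀)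
    (hreg₀ : ∀ t : ℝ, 0 < t →
      (μ {ω | 1 - 1 / t < Msub μ X I₁ h1 ω ∧ 1 - 1 / t < Msub μ X I₂ h2 ω}).toReal
        = t ^ (-η₀⁻¹) * L₀ t) :
    η₀ = (I₁ ×ˢ I₂).sup' (h1.product h2) (fun p => η {p.1} {p.2}) := by
  classical
  set F := fun k => margCDF μ X k with hF
  set s := I₁ ×ˢ I₂ with hs
  have hηp : ∀ p ∈ s, 0 < η {p.1} {p.2} ∧ η {p.1} {p.2} ≤ 1 := by
    intro p hp
    obtain ⟨hp1, hp2⟩ := Finset.mem_product.mp hp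
    exact hη {p.1} (singleton_subset_iff.mpr hp1) {p.2} (singleton_subset_iff.mpr hp2)
      (singleton_nonempty _) (singleton_nonempty _)
  have factA : ∀ p ∈ s, ∀ t : ℝ, 0 < t →
      t ^ (-(η {p.1} {p.2})⁻¹) * L {p.1} {p.2} t ≤ t ^ (-η₀⁻¹) * L₀ t := by
    intro p hp t ht
    obtain ⟨hp1, hp2⟩ := Finset.mem_product.mp hp
    rw [← hreg {p.1} (singleton_subset_iff.mpr hp1) {p.2} (singleton_subset_iff.mpr hp2)
        (singleton_nonempty _) (singleton_nonempty _) t ht, ← hreg₀ t ht]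
    refine ENNReal.toReal_mono (measure_ne_top μ _) (measure_mono ?_)
    intro ω hω
    simp only [Set.mem_setOf_eq, Msub] at hω ⊢
    have hi' := hω p.1 (Finset.mem_union_left _ (Finset.mem_singleton_self _))
    have hj' := hω p.2 (Finset.mem_union_right _ (Finset.mem_singleton_self _))
    exact ⟨lt_of_lt_of_le hi' (Finset.le_sup' (fun i => margCDF μ X i (X i ω)) hp1), lt_of_lt_of_le hj' (Finset.le_sup' (fun i => margCDF μ X i (X i ω)) hp2)⟩
  have factB : ∀ t : ℝ, 0 < t → t ^ (-η₀⁻¹) * L₀ t ≤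
      ∑ p ∈ s, t ^ (-(η {p.1} {p.2})⁻¹) * L {p.1} {p.2} t := by
    intro t ht
    rw [← hreg₀ t ht]
    have hsub : {ω | 1 - 1/t < Msub μ X I₁ h1 ω ∧ 1 - 1/t < Msub μ X I₂ h2 ω} ⊆
        ⋃ p ∈ s, {ω | ∀ k ∈ ({p.1} ∪ {p.2} : Finset (Fin d)),
          1 - 1/t < margCDF μ X k (X k ω)} := by
      intro ω hω
      simp only [Set.mem_setOf_eq, Msub] at hω
      obtain ⟨i, hi, hi'⟩ := (Finset.lt_sup'_iff h1).mp hω.1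
      obtain ⟨j, hj, hj'⟩ := (Finset.lt_sup'_iff h2).mp hω.2
      refine Set.mem_iUnion₂.mpr ⟨(i, j), Finset.mem_product.mpr ⟨hi, hj⟩, ?_⟩
      intro k hk
      rcases Finset.mem_union.mp hk with hk | hk <;> rw [Finset.mem_singleton] at hk <;>
        subst hk
      · exact hi'
      · exact hj'
    calc (μ {ω | 1 - 1/t < Msub μ X I₁ h1 ω ∧ 1 - 1/t < Msub μ X I₂ h2 ω}).toReal
        ≤ (∑ p ∈ s, μ {ω | ∀ k ∈ ({p.1} ∪ {p.2} : Finset (Fin d)),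
            1 - 1/t < margCDF μ X k (X k ω)}).toReal := by
          refine ENNReal.toReal_mono ?_
            ((measure_mono hsub).trans (measure_biUnion_finset_le _ _))
          exact (ENNReal.sum_lt_top.mpr fun p _ => measure_lt_top μ _).ne
      _ = ∑ p ∈ s, (μ {ω | ∀ k ∈ ({p.1} ∪ {p.2} : Finset (Fin d)),
            1 - 1/t < margCDF μ X k (X k ω)}).toReal :=
          ENNReal.toReal_sum fun p _ => measure_ne_top μ _
      _ = ∑ p ∈ s, t ^ (-(η {p.1} {p.2})⁻¹) * L {p.1} {p.2} t := by
          refine Finset.sum_congr rfl fun p hp => ?_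
          obtain ⟨hp1, hp2⟩ := Finset.mem_product.mp hp
          exact hreg {p.1} (singleton_subset_iff.mpr hp1) {p.2}
            (singleton_subset_iff.mpr hp2) (singleton_nonempty _) (singleton_nonempty _) t ht
  refine le_antisymm ?_ (Finset.sup'_le _ _ fun p hp => ?_)
  · -- η₀ ≤ sup'
    by_contra hcon
    push_neg at hcon
    set ηs := s.sup' (h1.product h2) (fun p => η {p.1} {p.2}) with hηs
    obtain ⟨p₀, hp₀⟩ : s.Nonempty := h1.product h2
    have hηs_pos : 0 < ηs := lt_of_lt_of_le (hηp p₀ hp₀).1 (Finset.le_sup' (fun p => η {p.1} {p.2}) hp₀)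
    have hab : η₀⁻¹ < ηs⁻¹ := by
      rw [inv_lt_inv₀ hη₀.1 hηs_pos] at *
      · exact hcon
    refine rv_compare η₀⁻¹ ηs⁻¹ hab (fun t => t ^ (-η₀⁻¹) * L₀ t)
      (fun t => ∑ p ∈ s, t ^ (-(η {p.1} {p.2})⁻¹) * L {p.1} {p.2} t) ?_ ?_ ?_
    · filter_upwards [eventually_gt_atTop 0] with t ht
      refine ⟨mul_pos (Real.rpow_pos_of_pos ht _) (hL₀pos t ht), ?_, factB t ht⟩
      exact Finset.sum_pos (fun p hp => mul_pos (Real.rpow_pos_of_pos ht _)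
        (by
          obtain ⟨hp1, hp2⟩ := Finset.mem_product.mp hp
          exact hLpos {p.1} (singleton_subset_iff.mpr hp1) {p.2}
            (singleton_subset_iff.mpr hp2) (singleton_nonempty _) (singleton_nonempty _) t ht))
        ⟨p₀, hp₀⟩
    · exact fun x hx => sv_lower η₀⁻¹ L₀ hL₀sv hL₀pos x hx
    · intro x hx
      have hx0 : (0:ℝ) < x := lt_trans one_pos hx
      have hall : ∀ᶠ t in atTop, ∀ p ∈ s,
          (t * x) ^ (-(η {p.1} {p.2})⁻¹) * L {p.1} {p.2} (t * x) ≤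
            (4/3) * x ^ (-(η {p.1} {p.2})⁻¹) * (t ^ (-(η {p.1} {p.2})⁻¹) * L {p.1} {p.2} t) := by
        rw [eventually_all_finset]
        intro p hp
        obtain ⟨hp1, hp2⟩ := Finset.mem_product.mp hp
        exact sv_upper _ _ (hLsv {p.1} (singleton_subset_iff.mpr hp1) {p.2}
          (singleton_subset_iff.mpr hp2) (singleton_nonempty _) (singleton_nonempty _))
          (fun t ht => hLpos {p.1} (singleton_subset_iff.mpr hp1) {p.2}
            (singleton_subset_iff.mpr hp2) (singleton_nonempty _) (singleton_nonempty _) t ht)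
          x hx
      filter_upwards [hall, eventually_gt_atTop 0] with t hall ht
      calc ∑ p ∈ s, (t * x) ^ (-(η {p.1} {p.2})⁻¹) * L {p.1} {p.2} (t * x)
          ≤ ∑ p ∈ s, (4/3) * x ^ (-(η {p.1} {p.2})⁻¹) *
              (t ^ (-(η {p.1} {p.2})⁻¹) * L {p.1} {p.2} t) := Finset.sum_le_sum hall
        _ ≤ ∑ p ∈ s, (4/3) * x ^ (-ηs⁻¹) *
              (t ^ (-(η {p.1} {p.2})⁻¹) * L {p.1} {p.2} t) := by
            refine Finset.sum_le_sum fun p hp => ?_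
            obtain ⟨hp1, hp2⟩ := Finset.mem_product.mp hp
            have hxx : x ^ (-(η {p.1} {p.2})⁻¹) ≤ x ^ (-ηs⁻¹) := by
              refine (Real.rpow_le_rpow_left_iff hx).mpr ?_
              have hi := inv_anti₀ (hηp p hp).1 (Finset.le_sup' (fun p => η {p.1} {p.2}) hp)
              linarith
            have hC : (0:ℝ) ≤ t ^ (-(η {p.1} {p.2})⁻¹) * L {p.1} {p.2} t := by
              refine le_of_lt (mul_pos (Real.rpow_pos_of_pos ht _) ?_)
              exact hLpos {p.1} (singleton_subset_iff.mpr hp1) {p.2}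
                (singleton_subset_iff.mpr hp2) (singleton_nonempty _) (singleton_nonempty _) t ht
            exact mul_le_mul_of_nonneg_right
              (mul_le_mul_of_nonneg_left hxx (by norm_num)) hC
        _ = (4/3) * x ^ (-ηs⁻¹) *
              ∑ p ∈ s, t ^ (-(η {p.1} {p.2})⁻¹) * L {p.1} {p.2} t := by
            rw [Finset.mul_sum]
  · -- each η_p ≤ η₀
    by_contra hcon
    push_neg at hcon
    obtain ⟨hp1, hp2⟩ := Finset.mem_product.mp hp
    have hab : (η {p.1} {p.2})⁻¹ < η₀⁻¹ := by
      rw [inv_lt_inv₀ (hηp p hp).1 hη₀.1]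
      exact hcon
    refine rv_compare (η {p.1} {p.2})⁻¹ η₀⁻¹ hab
      (fun t => t ^ (-(η {p.1} {p.2})⁻¹) * L {p.1} {p.2} t)
      (fun t => t ^ (-η₀⁻¹) * L₀ t) ?_ ?_ ?_
    · filter_upwards [eventually_gt_atTop 0] with t ht
      refine ⟨mul_pos (Real.rpow_pos_of_pos ht _) ?_,
        mul_pos (Real.rpow_pos_of_pos ht _) (hL₀pos t ht), factA p hp t ht⟩
      exact hLpos {p.1} (singleton_subset_iff.mpr hp1) {p.2}
        (singleton_subset_iff.mpr hp2) (singleton_nonempty _) (singleton_nonempty _) t ht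
    · exact fun x hx => sv_lower _ _ (hLsv {p.1} (singleton_subset_iff.mpr hp1) {p.2}
        (singleton_subset_iff.mpr hp2) (singleton_nonempty _) (singleton_nonempty _))
        (fun t ht => hLpos {p.1} (singleton_subset_iff.mpr hp1) {p.2}
          (singleton_subset_iff.mpr hp2) (singleton_nonempty _) (singleton_nonempty _) t ht) x hx
    · exact fun x hx => sv_upper η₀⁻¹ L₀ hL₀sv hL₀pos x hx
end

section
/- Let X = (X₁,…,X_d) be a random vector whose joint distribution function F is a MEV distribution with unit Fréchet marginals, and set l(x₁,…,x_d) = −log F(x₁,…,x_d). Then for all x₁,…,x_d > 0, l(x₁,…,x_d) = E( F₁(X₁)^{x₁} ∨ … ∨ F_d(X_d)^{x_d} ) / ( 1 − E( F₁(X₁)^{x₁} ∨ … ∨ F_d(X_d)^{x_d} ) ); equivalently, E( F₁(X₁)^{x₁} ∨ … ∨ F_d(X_d)^{x_d} ) = l(x₁,…,x_d) / ( 1 + l(x₁,…,x_d) ). -/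
open MeasureTheory Filter Finset

/-- For a MEV distribution with unit Fréchet marginals and
`l = -log F`: `l(x₁,…,x_d) = E(F₁(X₁)^{x₁} ∨ … ∨ F_d(X_d)^{x_d}) / (1 - E(…))`,
equivalently `E(F₁(X₁)^{x₁} ∨ … ∨ F_d(X_d)^{x_d}) = l(x₁,…,x_d)/(1 + l(x₁,…,x_d))`. -/
theorem statement12 {Ω : Type*} [MeasurableSpace Ω] (μ : Measure Ω) [IsProbabilityMeasure μ]
    {d : ℕ} (hd : 0 < d) (X : Fin d → Ω → ℝ) (hX : IsMEVFrechet μ X)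
    (x : Fin d → ℝ) (hx : ∀ i, 0 < x i) :
    stdf μ X x
      = (∫ ω, Finset.univ.sup' ⟨⟨0, hd⟩, Finset.mem_univ _⟩
            (fun i => margCDF μ X i (X i ω) ^ x i) ∂μ)
        / (1 - ∫ ω, Finset.univ.sup' ⟨⟨0, hd⟩, Finset.mem_univ _⟩
            (fun i => margCDF μ X i (X i ω) ^ x i) ∂μ) ∧
    (∫ ω, Finset.univ.sup' ⟨⟨0, hd⟩, Finset.mem_univ _⟩
          (fun i => margCDF μ X i (X i ω) ^ x i) ∂μ)
      = stdf μ X x / (1 + stdf μ X x) := by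
  obtain ⟨hmeas, hfre, hms⟩ := hX
  have hne : (Finset.univ : Finset (Fin d)).Nonempty := ⟨⟨0, hd⟩, Finset.mem_univ _⟩
  set i0 : Fin d := ⟨0, hd⟩ with hi0
  -- basic facts about margCDF
  have margnn : ∀ (i : Fin d) (u : ℝ), 0 ≤ margCDF μ X i u := fun i u => ENNReal.toReal_nonneg
  have margmono : ∀ i : Fin d, Monotone (margCDF μ X i) := by
    intro i u v huv
    exact ENNReal.toReal_mono (measure_ne_top μ _) (measure_mono fun ω h => le_trans h huv)
  have margle1 : ∀ (i : Fin d) (u : ℝ), margCDF μ X i u ≤ 1 := by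
    intro i u
    have := ENNReal.toReal_mono (a := μ {ω | X i ω ≤ u}) ENNReal.one_ne_top prob_le_one
    simpa [margCDF] using this
  have margzero : ∀ (i : Fin d) (u : ℝ), u ≤ 0 → margCDF μ X i u = 0 := by
    intro i u hu
    have hb : ∀ᶠ v in nhdsWithin (0:ℝ) (Set.Ioi 0), margCDF μ X i u ≤ Real.exp (-v⁻¹) := by
      apply eventually_nhdsWithin_of_forall
      intro v hv
      rw [← hfre i v hv]
      exact margmono i (hu.trans (le_of_lt hv))
    have hlim : Tendsto (fun v : ℝ => Real.exp (-v⁻¹)) (nhdsWithin 0 (Set.Ioi 0)) (nhds 0) :=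
      Real.tendsto_exp_atBot.comp (tendsto_neg_atBot_iff.mpr tendsto_inv_nhdsGT_zero)
    exact le_antisymm (ge_of_tendsto hlim hb) (margnn i u)
  -- pointwise values of the summands
  have hgpos : ∀ (i : Fin d) (ω : Ω), 0 < X i ω →
      margCDF μ X i (X i ω) ^ x i = Real.exp (-(X i ω)⁻¹ * x i) := by
    intro i ω h
    rw [hfre i _ h, Real.rpow_def_of_pos (Real.exp_pos _), Real.log_exp]
  have hgzero : ∀ (i : Fin d) (ω : Ω), X i ω ≤ 0 → margCDF μ X i (X i ω) ^ x i = 0 := by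
    intro i ω h
    rw [margzero i _ h, Real.zero_rpow (hx i).ne']
  -- the random variable V
  set V : Ω → ℝ := fun ω =>
    Finset.univ.sup' hne (fun i => margCDF μ X i (X i ω) ^ x i) with hV
  have hVle : ∀ ω, V ω ≤ 1 := fun ω =>
    Finset.sup'_le _ _ fun i _ => Real.rpow_le_one (margnn i _) (margle1 i _) (hx i).le
  have hVnn : ∀ ω, 0 ≤ V ω := fun ω =>
    le_trans (Real.rpow_nonneg (margnn i0 _) _)
      (Finset.le_sup' (fun i => margCDF μ X i (X i ω) ^ x i) (Finset.mem_univ i0))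
  have hVmeas : Measurable V := by
    have h1 : Measurable (Finset.univ.sup' hne
        (fun i (ω : Ω) => margCDF μ X i (X i ω) ^ x i)) := by
      apply Finset.measurable_sup' hne
      intro i _
      exact (Real.continuous_rpow_const (hx i).le).measurable.comp
        ((margmono i).measurable.comp (hmeas i))
    have h2 : V = Finset.univ.sup' hne (fun i (ω : Ω) => margCDF μ X i (X i ω) ^ x i) := by
      funext ω
      rw [Finset.sup'_apply]
    rw [h2]
    exact h1
  have hVint : Integrable V μ := by
    apply Integrable.mono' (integrable_const (1 : ℝ)) hVmeas.aestronglyMeasurable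
    apply ae_of_all
    intro ω
    rw [Real.norm_eq_abs, abs_of_nonneg (hVnn ω)]
    exact hVle ω
  -- F(x) > 0
  set F0 : ℝ := jointCDF μ X x with hF0
  have hF0pos : 0 < F0 := by
    have hunion : (⋃ n : ℕ, {ω | ∀ i, X i ω ≤ (n : ℝ) * x i}) = Set.univ := by
      ext ω
      simp only [Set.mem_iUnion, Set.mem_setOf_eq, Set.mem_univ, iff_true]
      obtain ⟨n, hn⟩ := exists_nat_ge (Finset.univ.sup' hne (fun i => X i ω / x i))
      refine ⟨n, fun i => ?_⟩
      have h1 : X i ω / x i ≤ (n : ℝ) :=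
        le_trans (Finset.le_sup' (fun i => X i ω / x i) (Finset.mem_univ i)) hn
      calc X i ω = (X i ω / x i) * x i := (div_mul_cancel₀ _ (hx i).ne').symm
        _ ≤ (n : ℝ) * x i := mul_le_mul_of_nonneg_right h1 (hx i).le
    have hmono : Monotone (fun n : ℕ => {ω | ∀ i, X i ω ≤ (n : ℝ) * x i}) := by
      intro m n hmn ω hω i
      exact le_trans (hω i)
        (mul_le_mul_of_nonneg_right (by exact_mod_cast hmn) (hx i).le)
    have hsup : (⨆ n : ℕ, μ {ω | ∀ i, X i ω ≤ (n : ℝ) * x i}) = 1 := by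
      rw [← (hmono.directed_le).measure_iUnion, hunion, measure_univ]
    have hex : ∃ n : ℕ, μ {ω | ∀ i, X i ω ≤ (n : ℝ) * x i} ≠ 0 := by
      by_contra h
      push_neg at h
      simp only [h, iSup_const] at hsup
      exact zero_ne_one hsup
    obtain ⟨n, hn⟩ := hex
    have hmne : μ {ω | ∀ i, X i ω ≤ ((n + 1 : ℕ) : ℝ) * x i} ≠ 0 := by
      intro h
      exact hn (measure_mono_null (hmono (Nat.le_succ n)) h)
    have hJpos : 0 < jointCDF μ X (fun i => ((n + 1 : ℕ) : ℝ) * x i) :=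
      ENNReal.toReal_pos hmne (measure_ne_top μ _)
    have hstab := hms ((n + 1 : ℕ) : ℝ) (by positivity) x hx
    rw [hF0, ← hstab]
    exact Real.rpow_pos_of_pos hJpos _
  have hF0lt : F0 < 1 := by
    have hle : F0 ≤ margCDF μ X i0 (x i0) :=
      ENNReal.toReal_mono (measure_ne_top μ _) (measure_mono fun ω h => h i0)
    rw [hfre i0 (x i0) (hx i0)] at hle
    exact lt_of_le_of_lt hle
      (Real.exp_lt_one_iff.mpr (neg_lt_zero.mpr (inv_pos.mpr (hx i0))))
  set l : ℝ := stdf μ X x with hl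
  have hlF : l = -Real.log F0 := rfl
  have hlpos : 0 < l := by
    rw [hlF]
    simpa using Real.log_neg hF0pos hF0lt
  have h1l : (1 : ℝ) + l ≠ 0 := by linarith
  have hexp : F0 = Real.exp (-l) := by
    rw [hlF, neg_neg, Real.exp_log hF0pos]
  -- CDF of V
  have hCDF : ∀ t : ℝ, 0 < t → t < 1 → (μ {ω | V ω ≤ t}).toReal = t ^ l := by
    intro t ht0 ht1
    have hlt : Real.log t < 0 := Real.log_neg ht0 ht1
    have hL : 0 < -Real.log t := by linarith
    set s : ℝ := (-Real.log t)⁻¹ with hs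
    have hs0 : 0 < s := inv_pos.mpr hL
    have key : ∀ (ω : Ω) (i : Fin d),
        margCDF μ X i (X i ω) ^ x i ≤ t ↔ X i ω ≤ s * x i := by
      intro ω i
      rcases le_or_gt (X i ω) 0 with hle | hpos
      · have h2 : X i ω ≤ s * x i := hle.trans (mul_pos hs0 (hx i)).le
        rw [hgzero i ω hle]
        simp [ht0.le, h2]
      · rw [hgpos i ω hpos,
          show t = Real.exp (Real.log t) from (Real.exp_log ht0).symm, Real.exp_le_exp,
          neg_mul, neg_le, inv_mul_eq_div, hs, inv_mul_eq_div,
          le_div_iff₀ hpos, le_div_iff₀ hL, mul_comm (-Real.log t) (X i ω)]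
    have hset : {ω | V ω ≤ t} = {ω | ∀ i, X i ω ≤ s * x i} := by
      ext ω
      simp only [Set.mem_setOf_eq, hV, Finset.sup'_le_iff, Finset.mem_univ, true_implies]
      exact forall_congr' (fun i => key ω i)
    rw [hset]
    have hms' := hms s hs0 x hx
    have hJnn : 0 ≤ jointCDF μ X (fun i => s * x i) := ENNReal.toReal_nonneg
    have hJval : jointCDF μ X (fun i => s * x i) = F0 ^ s⁻¹ := by
      rw [hF0, ← hms', ← Real.rpow_mul hJnn, mul_inv_cancel₀ hs0.ne', Real.rpow_one]
    show jointCDF μ X (fun i => s * x i) = t ^ l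
    rw [hJval, hexp, Real.rpow_def_of_pos (Real.exp_pos _), Real.log_exp, hs, inv_inv,
      Real.rpow_def_of_pos ht0]
    ring_nf
  -- tail probability of V
  have hTail : ∀ t : ℝ, 0 < t → t ≤ 1 → (μ {a | t < V a}).toReal = 1 - t ^ l := by
    intro t ht0 ht1
    rcases eq_or_lt_of_le ht1 with rfl | ht1
    · have hempty : {a | (1 : ℝ) < V a} = ∅ := by
        ext a
        simp only [Set.mem_setOf_eq, Set.mem_empty_iff_false, iff_false, not_lt]
        exact hVle a
      simp [hempty, Real.one_rpow]
    · have hmset : MeasurableSet {ω | V ω ≤ t} := hVmeas measurableSet_Iic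
      have hcomp : {a | t < V a} = {ω | V ω ≤ t}ᶜ := by
        ext a
        simp [not_le]
      rw [hcomp, prob_compl_eq_one_sub hmset,
        ENNReal.toReal_sub_of_le prob_le_one ENNReal.one_ne_top, ENNReal.toReal_one,
        hCDF t ht0 ht1]
  -- the expectation
  have hE : ∫ ω, V ω ∂μ = l / (1 + l) := by
    rw [hVint.integral_eq_integral_meas_lt (ae_of_all _ hVnn)]
    simp only [measureReal_def]
    have h1 : ∫ t in Set.Ioi (0:ℝ), (μ {a | t < V a}).toReal
        = ∫ t in Set.Ioc (0:ℝ) 1, (μ {a | t < V a}).toReal := by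
      apply setIntegral_eq_of_subset_of_ae_diff_eq_zero nullMeasurableSet_Ioi
        Set.Ioc_subset_Ioi_self
      apply Eventually.of_forall
      intro t ht
      have h1t : 1 < t := by
        simp only [Set.mem_diff, Set.mem_Ioi, Set.mem_Ioc, not_and, not_le] at ht
        exact ht.2 ht.1
      have hempty : {a | t < V a} = ∅ := by
        ext a
        simp only [Set.mem_setOf_eq, Set.mem_empty_iff_false, iff_false, not_lt]
        exact (hVle a).trans h1t.le
      simp [hempty]
    rw [h1, setIntegral_congr_fun measurableSet_Ioc (fun t ht => hTail t ht.1 ht.2),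
      ← intervalIntegral.integral_of_le zero_le_one,
      intervalIntegral.integral_sub intervalIntegrable_const
        (intervalIntegral.intervalIntegrable_rpow (Or.inl hlpos.le)),
      integral_rpow (Or.inl (by linarith : (-1:ℝ) < l)),
      intervalIntegral.integral_const, Real.one_rpow,
      Real.zero_rpow (by linarith : (0:ℝ) < l + 1).ne', smul_eq_mul, mul_one, sub_zero,
      eq_div_iff (by linarith : (1:ℝ) + l ≠ 0), sub_mul, one_mul, div_mul_eq_mul_div,
      one_mul, show l + 1 = 1 + l from add_comm l 1,
      div_self (by linarith : (1:ℝ) + l ≠ 0)]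
    ring
  -- conclusion
  have hgoalE : (∫ ω, Finset.univ.sup' ⟨⟨0, hd⟩, Finset.mem_univ _⟩
      (fun i => margCDF μ X i (X i ω) ^ x i) ∂μ) = l / (1 + l) := hE
  rw [hgoalE]
  refine ⟨?_, rfl⟩
  have h2 : 1 - l / (1 + l) = 1 / (1 + l) := by field_simp; ring
  rw [h2]
  field_simp
end

section
/- Let X = (X₁,…,X_d) be a random vector whose joint distribution function F is a MEV distribution with unit Fréchet marginals, and let I₁, I₂ be disjoint non-empty subsets of {1,…,d}. Then for all x, y > 0: x ε_{I₁} = E(M(I₁)^{1/x}) / (1 − E(M(I₁)^{1/x})), y ε_{I₂} = E(M(I₂)^{1/y}) / (1 − E(M(I₂)^{1/y})), and l^{(I₁,I₂)}(x^{-1}, y^{-1}) = E( M(I₁)^{1/x} ∨ M(I₂)^{1/y} ) / ( 1 − E( M(I₁)^{1/x} ∨ M(I₂)^{1/y} ) ). -/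
open MeasureTheory Filter Finset Topology ENNReal NNReal
set_option linter.unusedSectionVars false
set_option linter.unusedVariables false

section Aux

variable {Ω : Type*} [MeasurableSpace Ω] (μ : Measure Ω) [IsProbabilityMeasure μ]
  {d : ℕ} (X : Fin d → Ω → ℝ)

/-- The set underlying `mevL`. -/
def subSet (I₁ I₂ : Finset (Fin d)) (a b : ℝ) : Set Ω :=
  {ω | (∀ i ∈ I₁, X i ω ≤ a) ∧ (∀ j ∈ I₂, X j ω ≤ b)}

/-- The bivariate marginal CDF of the subvectors indexed by `I₁` and `I₂`. -/
noncomputable def F2 (I₁ I₂ : Finset (Fin d)) (a b : ℝ) : ℝ :=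
  (μ (subSet X I₁ I₂ a b)).toReal

variable {X}

lemma F2_nonneg (I₁ I₂ : Finset (Fin d)) (a b : ℝ) : 0 ≤ F2 μ X I₁ I₂ a b :=
  ENNReal.toReal_nonneg

lemma F2_le_one (I₁ I₂ : Finset (Fin d)) (a b : ℝ) : F2 μ X I₁ I₂ a b ≤ 1 := by
  have := prob_le_one (μ := μ) (s := subSet X I₁ I₂ a b)
  simpa [F2] using ENNReal.toReal_mono ENNReal.one_ne_top this

lemma tendsto_mu_subSet (I₁ I₂ : Finset (Fin d)) {a b : ℝ}
    (hab : ∀ i ∈ I₁, i ∈ I₂ → a ≤ b) {c : ℕ → ℝ} (hc : Monotone c)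
    (hct : Tendsto c atTop atTop) :
    Tendsto (fun n => μ {ω | ∀ i, X i ω ≤ (if i ∈ I₁ then a else if i ∈ I₂ then b else c n)})
      atTop (𝓝 (μ (subSet X I₁ I₂ a b))) := by
  set s : ℕ → Set Ω := fun n =>
    {ω | ∀ i, X i ω ≤ (if i ∈ I₁ then a else if i ∈ I₂ then b else c n)} with hs
  have hmono : Monotone s := by
    intro n m hnm ω hω i
    have := hω i
    split_ifs with h1 h2
    · simpa [h1] using this
    · simpa [h1, h2] using this
    · simp only [h1, h2, if_false] at this
      exact this.trans (hc hnm)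
  have hunion : (⋃ n, s n) = subSet X I₁ I₂ a b := by
    ext ω
    constructor
    · rintro ⟨t, ⟨n, rfl⟩, hω⟩
      constructor
      · intro i hi
        have := hω i
        simpa [hi] using this
      · intro j hj
        have := hω j
        by_cases hj1 : j ∈ I₁
        · simp only [hj1, if_true] at this
          exact this.trans (hab j hj1 hj)
        · simpa [hj1, hj] using this
    · intro hω
      have hev : ∀ᶠ n in atTop, ∀ i, X i ω ≤ c n :=
        eventually_all.2 fun i => hct.eventually_ge_atTop (X i ω)
      obtain ⟨n, hn⟩ := hev.exists
      refine Set.mem_iUnion.2 ⟨n, fun i => ?_⟩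
      split_ifs with h1 h2
      · exact hω.1 i h1
      · exact hω.2 i h2
      · exact hn i
  have := tendsto_measure_iUnion_atTop (μ := μ) hmono
  rw [hunion] at this
  exact this

lemma tendsto_jointCDF_F2 (I₁ I₂ : Finset (Fin d)) {a b : ℝ}
    (hab : ∀ i ∈ I₁, i ∈ I₂ → a ≤ b) {c : ℕ → ℝ} (hc : Monotone c)
    (hct : Tendsto c atTop atTop) :
    Tendsto (fun n => jointCDF μ X
        (fun i => if i ∈ I₁ then a else if i ∈ I₂ then b else c n))
      atTop (𝓝 (F2 μ X I₁ I₂ a b)) := by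
  have h := tendsto_mu_subSet (X := X) μ I₁ I₂ hab hc hct
  exact (ENNReal.tendsto_toReal (measure_ne_top μ _)).comp h

lemma F2_scale (hX : IsMEVFrechet μ X) (I₁ I₂ : Finset (Fin d)) {a b t : ℝ}
    (hab : ∀ i ∈ I₁, i ∈ I₂ → a ≤ b)
    (ha : 0 < a) (hb : 0 < b) (ht : 0 < t) :
    F2 μ X I₁ I₂ (t * a) (t * b) ^ t = F2 μ X I₁ I₂ a b := by
  have hc : Monotone (fun n : ℕ => (n : ℝ) + 1) := by
    intro n m h
    simp only [add_le_add_iff_right, Nat.cast_le]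
    exact h
  have hct : Tendsto (fun n : ℕ => (n : ℝ) + 1) atTop atTop :=
    tendsto_atTop_add_const_right _ _ tendsto_natCast_atTop_atTop
  have hc' : Monotone (fun n : ℕ => t * ((n : ℝ) + 1)) :=
    fun n m h => mul_le_mul_of_nonneg_left (hc h) ht.le
  have hct' : Tendsto (fun n : ℕ => t * ((n : ℝ) + 1)) atTop atTop :=
    (tendsto_const_mul_atTop_of_pos ht).2 hct
  have hab' : ∀ i ∈ I₁, i ∈ I₂ → t * a ≤ t * b :=
    fun i h1 h2 => mul_le_mul_of_nonneg_left (hab i h1 h2) ht.le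
  have h1 := tendsto_jointCDF_F2 (X := X) μ I₁ I₂ hab hc hct
  have h2 := tendsto_jointCDF_F2 (X := X) μ I₁ I₂ hab' hc' hct'
  have key : ∀ n : ℕ, jointCDF μ X
      (fun i => if i ∈ I₁ then t * a else if i ∈ I₂ then t * b else t * ((n : ℝ) + 1)) ^ t
      = jointCDF μ X (fun i => if i ∈ I₁ then a else if i ∈ I₂ then b else ((n : ℝ) + 1)) := by
    intro n
    have hpos : ∀ i, (0 : ℝ) < (if i ∈ I₁ then a else if i ∈ I₂ then b else ((n : ℝ) + 1)) := by
      intro i; split_ifs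
      · exact ha
      · exact hb
      · positivity
    have := hX.maxStable t ht _ hpos
    rw [← this]
    have harg : (fun i => if i ∈ I₁ then t * a else if i ∈ I₂ then t * b else t * ((n : ℝ) + 1))
        = (fun i => t * (if i ∈ I₁ then a else if i ∈ I₂ then b else ((n : ℝ) + 1))) := by
      funext i
      split_ifs <;> ring
    rw [harg]
  -- limit of the left hand side
  have h2' : Tendsto (fun n : ℕ => jointCDF μ X
      (fun i => if i ∈ I₁ then t * a else if i ∈ I₂ then t * b else t * ((n : ℝ) + 1)) ^ t)
      atTop (𝓝 (F2 μ X I₁ I₂ (t * a) (t * b) ^ t)) := by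
    exact (Real.continuousAt_rpow_const _ t (Or.inr ht.le)).tendsto.comp h2
  have : Tendsto (fun n : ℕ => jointCDF μ X
      (fun i => if i ∈ I₁ then a else if i ∈ I₂ then b else ((n : ℝ) + 1)))
      atTop (𝓝 (F2 μ X I₁ I₂ (t * a) (t * b) ^ t)) := by
    simpa only [key] using h2'
  exact tendsto_nhds_unique this h1

lemma F2_pos (hX : IsMEVFrechet μ X) (I₁ I₂ : Finset (Fin d)) {a b : ℝ}
    (hab : ∀ i ∈ I₁, i ∈ I₂ → a ≤ b)
    (ha : 0 < a) (hb : 0 < b) : 0 < F2 μ X I₁ I₂ a b := by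
  rcases lt_or_eq_of_le (F2_nonneg μ I₁ I₂ a b (X := X)) with h | h
  · exact h
  exfalso
  -- all scaled measures vanish
  have hzero : ∀ n : ℕ, μ (subSet X I₁ I₂ (((n : ℝ) + 1) * a) (((n : ℝ) + 1) * b)) = 0 := by
    intro n
    have htn : (0 : ℝ) < (n : ℝ) + 1 := by positivity
    have hs := F2_scale μ hX I₁ I₂ hab ha hb htn
    by_contra hne
    have hpos : 0 < F2 μ X I₁ I₂ (((n : ℝ) + 1) * a) (((n : ℝ) + 1) * b) := by
      refine ENNReal.toReal_pos hne (measure_ne_top μ _)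
    have := Real.rpow_pos_of_pos hpos ((n : ℝ) + 1)
    rw [hs, ← h] at this
    exact lt_irrefl _ this
  have hcover : (Set.univ : Set Ω) ⊆ ⋃ n : ℕ, subSet X I₁ I₂ (((n : ℝ) + 1) * a) (((n : ℝ) + 1) * b) := by
    intro ω _
    have hev1 : ∀ᶠ n : ℕ in atTop, ∀ i ∈ I₁, X i ω ≤ ((n : ℝ) + 1) * a := by
      rw [eventually_all_finset]
      intro i _
      have : Tendsto (fun n : ℕ => ((n : ℝ) + 1) * a) atTop atTop :=
        Tendsto.atTop_mul_const ha (tendsto_atTop_add_const_right _ _ tendsto_natCast_atTop_atTop)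
      exact this.eventually_ge_atTop (X i ω)
    have hev2 : ∀ᶠ n : ℕ in atTop, ∀ j ∈ I₂, X j ω ≤ ((n : ℝ) + 1) * b := by
      rw [eventually_all_finset]
      intro j _
      have : Tendsto (fun n : ℕ => ((n : ℝ) + 1) * b) atTop atTop :=
        Tendsto.atTop_mul_const hb (tendsto_atTop_add_const_right _ _ tendsto_natCast_atTop_atTop)
      exact this.eventually_ge_atTop (X j ω)
    obtain ⟨n, hn1, hn2⟩ := (hev1.and hev2).exists
    exact Set.mem_iUnion.2 ⟨n, hn1, hn2⟩
  have : μ (Set.univ : Set Ω) = 0 := by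
    refine le_antisymm ?_ (zero_le')
    calc μ (Set.univ : Set Ω)
        ≤ μ (⋃ n : ℕ, subSet X I₁ I₂ (((n : ℝ) + 1) * a) (((n : ℝ) + 1) * b)) :=
          measure_mono hcover
      _ = 0 := measure_iUnion_null hzero
  simp [measure_univ] at this

lemma X_pos_ae (hX : IsMEVFrechet μ X) (i : Fin d) : ∀ᵐ ω ∂μ, 0 < X i ω := by
  rw [ae_iff]
  have hset : {ω | ¬ 0 < X i ω} = {ω | X i ω ≤ 0} := by
    ext ω; simp [not_lt]
  rw [hset]
  have hb : ∀ n : ℕ, μ {ω | X i ω ≤ 0} ≤ ENNReal.ofReal (Real.exp (-((n : ℝ) + 1))) := by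
    intro n
    have hu : (0 : ℝ) < ((n : ℝ) + 1)⁻¹ := by positivity
    have h1 : margCDF μ X i (((n : ℝ) + 1)⁻¹) = Real.exp (-(((n : ℝ) + 1)⁻¹)⁻¹) :=
      hX.frechet i _ hu
    rw [inv_inv] at h1
    have h2 : μ {ω | X i ω ≤ ((n : ℝ) + 1)⁻¹} = ENNReal.ofReal (Real.exp (-((n : ℝ) + 1))) := by
      rw [← h1, margCDF, ENNReal.ofReal_toReal (measure_ne_top μ _)]
    calc μ {ω | X i ω ≤ 0} ≤ μ {ω | X i ω ≤ ((n : ℝ) + 1)⁻¹} :=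
          measure_mono (fun ω hω => le_trans hω hu.le)
      _ = _ := h2
  have hlim : Tendsto (fun n : ℕ => ENNReal.ofReal (Real.exp (-((n : ℝ) + 1)))) atTop (𝓝 0) := by
    rw [← ENNReal.ofReal_zero]
    apply ENNReal.tendsto_ofReal
    have : Tendsto (fun n : ℕ => -((n : ℝ) + 1)) atTop atBot := by
      apply tendsto_neg_atBot_iff.2
      exact tendsto_atTop_add_const_right _ _ tendsto_natCast_atTop_atTop
    exact Real.tendsto_exp_atBot.comp this
  exact le_antisymm (ge_of_tendsto' hlim hb) (zero_le')

end Aux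

section Core

variable {Ω : Type*} [MeasurableSpace Ω] (μ : Measure Ω) [IsProbabilityMeasure μ]
  {d : ℕ} {X : Fin d → Ω → ℝ}

lemma margCDF_nonneg (i : Fin d) (u : ℝ) : 0 ≤ margCDF μ X i u := ENNReal.toReal_nonneg

lemma margCDF_le_one (i : Fin d) (u : ℝ) : margCDF μ X i u ≤ 1 :=
  ENNReal.toReal_mono ENNReal.one_ne_top prob_le_one

lemma Msub_nonneg (I : Finset (Fin d)) (hI : I.Nonempty) (ω : Ω) : 0 ≤ Msub μ X I hI ω := by
  obtain ⟨i, hi⟩ := hI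
  exact le_trans (margCDF_nonneg μ i (X i ω))
    (Finset.le_sup' (fun j => margCDF μ X j (X j ω)) hi)

lemma Msub_le_one (I : Finset (Fin d)) (hI : I.Nonempty) (ω : Ω) : Msub μ X I hI ω ≤ 1 :=
  Finset.sup'_le _ _ fun i _ => margCDF_le_one μ i (X i ω)

lemma margCDF_monotone (i : Fin d) : Monotone (margCDF μ X i) := fun u v huv =>
  ENNReal.toReal_mono (measure_ne_top μ _) (measure_mono fun ω hω => le_trans hω huv)

lemma Msub_measurable (hX : IsMEVFrechet μ X) (I : Finset (Fin d)) (hI : I.Nonempty) :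
    Measurable (Msub μ X I hI) := by
  have heq : Msub μ X I hI = I.sup' hI (fun i => (margCDF μ X i) ∘ (X i)) := by
    funext ω
    rw [Finset.sup'_apply]
    rfl
  rw [heq]
  exact Finset.measurable_sup' hI fun i _ => ((margCDF_monotone μ i).measurable).comp (hX.meas i)

lemma core (hX : IsMEVFrechet μ X) (I₁ I₂ : Finset (Fin d)) (h1 : I₁.Nonempty)
    (h2 : I₂.Nonempty) {x y : ℝ} (hx : 0 < x) (hy : 0 < y)
    (hxy : ∀ i ∈ I₁, i ∈ I₂ → x = y) :
    mevL μ X I₁ I₂ x⁻¹ y⁻¹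
      = (∫ ω, max (Msub μ X I₁ h1 ω ^ x⁻¹) (Msub μ X I₂ h2 ω ^ y⁻¹) ∂μ)
        / (1 - ∫ ω, max (Msub μ X I₁ h1 ω ^ x⁻¹) (Msub μ X I₂ h2 ω ^ y⁻¹) ∂μ) := by
  have hab : ∀ i ∈ I₁, i ∈ I₂ → x⁻¹ ≤ y⁻¹ := fun i hi1 hi2 => le_of_eq (by rw [hxy i hi1 hi2])
  set v : ℝ := F2 μ X I₁ I₂ x⁻¹ y⁻¹ with hv
  have hv0 : 0 < v := F2_pos μ hX I₁ I₂ hab (inv_pos.2 hx) (inv_pos.2 hy)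
  have hv1 : v ≤ 1 := F2_le_one μ I₁ I₂ _ _
  set L : ℝ := -Real.log v with hL
  have hL0 : 0 ≤ L := neg_nonneg.2 (Real.log_nonpos hv0.le hv1)
  have hmevL : mevL μ X I₁ I₂ x⁻¹ y⁻¹ = L := rfl
  set V : Ω → ℝ := fun ω => max (Msub μ X I₁ h1 ω ^ x⁻¹) (Msub μ X I₂ h2 ω ^ y⁻¹) with hVdef
  have hV0 : ∀ ω, 0 ≤ V ω := fun ω =>
    le_max_of_le_left (Real.rpow_nonneg (Msub_nonneg μ I₁ h1 ω) _)
  have hV1 : ∀ ω, V ω ≤ 1 := fun ω => max_le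
    (Real.rpow_le_one (Msub_nonneg μ I₁ h1 ω) (Msub_le_one μ I₁ h1 ω) (inv_nonneg.2 hx.le))
    (Real.rpow_le_one (Msub_nonneg μ I₂ h2 ω) (Msub_le_one μ I₂ h2 ω) (inv_nonneg.2 hy.le))
  have hVmeas : Measurable V :=
    ((Msub_measurable μ hX I₁ h1).pow_const _).max ((Msub_measurable μ hX I₂ h2).pow_const _)
  -- the distribution function of V
  have hcdf : ∀ u : ℝ, u ∈ Set.Ioo (0:ℝ) 1 → μ {ω | V ω ≤ u} = ENNReal.ofReal (u ^ L) := by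
    intro u hu
    set s : ℝ := -Real.log u with hsdef
    have hs : 0 < s := neg_pos.2 (Real.log_neg hu.1 hu.2)
    have haeq : ∀ᵐ ω ∂μ, (V ω ≤ u ↔ ω ∈ subSet X I₁ I₂ (x * s)⁻¹ (y * s)⁻¹) := by
      filter_upwards [MeasureTheory.ae_all_iff.2 (fun i => X_pos_ae μ hX i)] with ω hpos
      have key : ∀ (I : Finset (Fin d)) (hI : I.Nonempty) (z : ℝ), 0 < z →
          (Msub μ X I hI ω ^ z⁻¹ ≤ u ↔ ∀ i ∈ I, X i ω ≤ (z * s)⁻¹) := by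
        intro I hI z hz
        rw [Real.rpow_inv_le_iff_of_pos (Msub_nonneg μ I hI ω) hu.1.le hz]
        rw [Msub, Finset.sup'_le_iff]
        apply forall₂_congr
        intro i hi
        rw [hX.frechet i _ (hpos i), Real.rpow_def_of_pos hu.1, Real.exp_le_exp]
        have hlogu : Real.log u = -s := by rw [hsdef, neg_neg]
        rw [hlogu]
        constructor
        · intro h
          have h1 : s * z ≤ (X i ω)⁻¹ := by nlinarith
          have h2 := (le_inv_comm₀ (by positivity : (0:ℝ) < s * z) (hpos i)).1 h1
          rw [mul_comm z s]
          exact h2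
        · intro h
          rw [mul_comm z s] at h
          have h2 := (le_inv_comm₀ (by positivity : (0:ℝ) < s * z) (hpos i)).2 h
          nlinarith
      constructor
      · intro hVu
        rcases max_le_iff.1 hVu with ⟨hA, hB⟩
        exact ⟨(key I₁ h1 x hx).1 hA, (key I₂ h2 y hy).1 hB⟩
      · rintro ⟨hA, hB⟩
        exact max_le ((key I₁ h1 x hx).2 hA) ((key I₂ h2 y hy).2 hB)
    have hμeq : μ {ω | V ω ≤ u} = μ (subSet X I₁ I₂ (x * s)⁻¹ (y * s)⁻¹) := by
      apply measure_congr
      filter_upwards [haeq] with ω hω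
      exact propext hω
    have hF2s : F2 μ X I₁ I₂ (x * s)⁻¹ (y * s)⁻¹ = v ^ s := by
      have hscale := F2_scale μ hX I₁ I₂ hab (inv_pos.2 hx) (inv_pos.2 hy)
        (t := s⁻¹) (inv_pos.2 hs)
      have harg1 : s⁻¹ * x⁻¹ = (x * s)⁻¹ := by rw [mul_inv]; ring
      have harg2 : s⁻¹ * y⁻¹ = (y * s)⁻¹ := by rw [mul_inv]; ring
      rw [harg1, harg2] at hscale
      have h0 : 0 ≤ F2 μ X I₁ I₂ (x * s)⁻¹ (y * s)⁻¹ := F2_nonneg μ _ _ _ _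
      calc F2 μ X I₁ I₂ (x * s)⁻¹ (y * s)⁻¹
          = (F2 μ X I₁ I₂ (x * s)⁻¹ (y * s)⁻¹ ^ s⁻¹) ^ s := by
            rw [← Real.rpow_mul h0, inv_mul_cancel₀ hs.ne', Real.rpow_one]
        _ = v ^ s := by rw [hscale]
    have htoReal : (μ {ω | V ω ≤ u}).toReal = u ^ L := by
      rw [hμeq]
      show F2 μ X I₁ I₂ (x * s)⁻¹ (y * s)⁻¹ = u ^ L
      rw [hF2s, Real.rpow_def_of_pos hv0, Real.rpow_def_of_pos hu.1]
      congr 1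
      have h1 : s = -Real.log u := hsdef
      have h2 : L = -Real.log v := hL
      rw [h1, h2]
      ring
    calc μ {ω | V ω ≤ u}
        = ENNReal.ofReal ((μ {ω | V ω ≤ u}).toReal) :=
          (ENNReal.ofReal_toReal (measure_ne_top μ _)).symm
      _ = ENNReal.ofReal (u ^ L) := by rw [htoReal]
  -- the expectation of V
  have hEV : ∫ ω, V ω ∂μ = L / (L + 1) := by
    rw [integral_eq_lintegral_of_nonneg_ae (ae_of_all μ hV0) hVmeas.aestronglyMeasurable]
    rw [lintegral_eq_lintegral_meas_lt μ (ae_of_all μ hV0) hVmeas.aemeasurable]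
    have hsplit : (Set.Ioi (0:ℝ)) = Set.Ioo 0 1 ∪ Set.Ici 1 :=
      (Set.Ioo_union_Ici_eq_Ioi zero_lt_one).symm
    have hdisj : Disjoint (Set.Ioo (0:ℝ) 1) (Set.Ici 1) :=
      Set.disjoint_left.2 fun t ht ht' => absurd ht.2 (not_lt.2 ht')
    rw [hsplit, lintegral_union measurableSet_Ici hdisj]
    have hIci : ∫⁻ t in Set.Ici (1:ℝ), μ {a | t < V a} = 0 := by
      have hz : ∀ t ∈ Set.Ici (1:ℝ), μ {a | t < V a} = (0 : ℝ≥0∞) := by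
        intro t ht
        have hempty : {a | t < V a} = ∅ := by
          ext a
          simp only [Set.mem_setOf_eq, Set.mem_empty_iff_false, iff_false, not_lt]
          exact (hV1 a).trans ht
        rw [hempty, measure_empty]
      calc ∫⁻ t in Set.Ici (1:ℝ), μ {a | t < V a}
          = ∫⁻ _ in Set.Ici (1:ℝ), (0 : ℝ≥0∞) :=
            setLIntegral_congr_fun measurableSet_Ici hz
        _ = 0 := lintegral_zero
    have hIoo : ∫⁻ t in Set.Ioo (0:ℝ) 1, μ {a | t < V a} = ENNReal.ofReal (L / (L + 1)) := by
      have hcongr : ∀ t ∈ Set.Ioo (0:ℝ) 1, μ {a | t < V a} = ENNReal.ofReal (1 - t ^ L) := by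
        intro t ht
        have hcompl : {a | t < V a} = {a | V a ≤ t}ᶜ := by
          ext a; simp [not_le]
        rw [hcompl, prob_compl_eq_one_sub (s := {a | V a ≤ t}) (hVmeas measurableSet_Iic), hcdf t ht,
          ENNReal.ofReal_sub _ (Real.rpow_nonneg ht.1.le _), ENNReal.ofReal_one]
      rw [setLIntegral_congr_fun measurableSet_Ioo hcongr]
      have hintR : IntegrableOn (fun t : ℝ => t ^ L) (Set.Ioo (0:ℝ) 1) := by
        have h1 : IntervalIntegrable (fun t : ℝ => t ^ L) MeasureTheory.volume 0 1 :=
          intervalIntegral.intervalIntegrable_rpow (Or.inl hL0)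
        exact (intervalIntegrable_iff_integrableOn_Ioo_of_le zero_le_one).1 h1
      have hint : IntegrableOn (fun t : ℝ => 1 - t ^ L) (Set.Ioo (0:ℝ) 1) := by
        exact (integrableOn_const measure_Ioo_lt_top.ne).sub hintR
      have hnn : 0 ≤ᵐ[MeasureTheory.volume.restrict (Set.Ioo (0:ℝ) 1)]
          fun t : ℝ => 1 - t ^ L := by
        refine (ae_restrict_iff' measurableSet_Ioo).2 (ae_of_all _ fun t ht => ?_)
        exact sub_nonneg.2 (Real.rpow_le_one ht.1.le ht.2.le hL0)
      rw [← ofReal_integral_eq_lintegral_ofReal hint hnn]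
      congr 1
      rw [← integral_Ioc_eq_integral_Ioo, ← intervalIntegral.integral_of_le zero_le_one]
      rw [intervalIntegral.integral_sub intervalIntegrable_const
        (intervalIntegral.intervalIntegrable_rpow (Or.inl hL0))]
      rw [integral_rpow (Or.inl (by linarith : (-1:ℝ) < L))]
      have hL1 : L + 1 ≠ 0 := ne_of_gt (by linarith)
      rw [Real.one_rpow, Real.zero_rpow hL1]
      simp only [intervalIntegral.integral_const, smul_eq_mul, sub_zero, mul_one]
      field_simp
      ring
    rw [hIci, add_zero, hIoo, ENNReal.toReal_ofReal (div_nonneg hL0 (by linarith))]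
  have hEV' : integral μ V = L / (L + 1) := hEV
  rw [hmevL, hEV']
  have hL1 : L + 1 ≠ 0 := ne_of_gt (by linarith)
  have h2 : 1 - L / (L + 1) = 1 / (L + 1) := by field_simp; ring
  rw [h2]
  field_simp

lemma scale_extCoef (hX : IsMEVFrechet μ X) (I : Finset (Fin d)) {x : ℝ} (hx : 0 < x) :
    x * extCoef μ X I = mevL μ X I I x⁻¹ x⁻¹ := by
  have hset : {ω : Ω | (∀ i ∈ I, X i ω ≤ (1:ℝ)) ∧ ∀ j ∈ (∅ : Finset (Fin d)), X j ω ≤ (1:ℝ)}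
      = subSet X I I 1 1 := by
    ext ω; simp [subSet]
  have h1 : extCoef μ X I = -Real.log (F2 μ X I I 1 1) := by
    rw [extCoef, mevL, hset]; rfl
  have h2 : mevL μ X I I x⁻¹ x⁻¹ = -Real.log (F2 μ X I I x⁻¹ x⁻¹) := rfl
  have hscale := F2_scale μ hX I I (fun _ _ _ => le_rfl) (inv_pos.2 hx) (inv_pos.2 hx)
    (t := x) hx
  rw [mul_inv_cancel₀ hx.ne'] at hscale
  have hpos : 0 < F2 μ X I I 1 1 := F2_pos μ hX I I (fun _ _ _ => le_rfl) one_pos one_pos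
  rw [h1, h2, ← hscale, Real.log_rpow hpos]
  ring

end Core

/-- For a MEV distribution with unit Fréchet marginals,
`xε_{I₁} = E(M(I₁)^{1/x})/(1 - E(M(I₁)^{1/x}))`,
`yε_{I₂} = E(M(I₂)^{1/y})/(1 - E(M(I₂)^{1/y}))`, and
`l^{(I₁,I₂)}(x⁻¹,y⁻¹) = E(M(I₁)^{1/x} ∨ M(I₂)^{1/y})/(1 - E(M(I₁)^{1/x} ∨ M(I₂)^{1/y}))`. -/
theorem statement13 {Ω : Type*} [MeasurableSpace Ω] (μ : Measure Ω) [IsProbabilityMeasure μ]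
    {d : ℕ} (X : Fin d → Ω → ℝ) (hX : IsMEVFrechet μ X)
    (I₁ I₂ : Finset (Fin d)) (h1 : I₁.Nonempty) (h2 : I₂.Nonempty) (hdisj : Disjoint I₁ I₂)
    (x y : ℝ) (hx : 0 < x) (hy : 0 < y) :
    x * extCoef μ X I₁
      = (∫ ω, Msub μ X I₁ h1 ω ^ x⁻¹ ∂μ) / (1 - ∫ ω, Msub μ X I₁ h1 ω ^ x⁻¹ ∂μ) ∧
    y * extCoef μ X I₂
      = (∫ ω, Msub μ X I₂ h2 ω ^ y⁻¹ ∂μ) / (1 - ∫ ω, Msub μ X I₂ h2 ω ^ y⁻¹ ∂μ) ∧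
    mevL μ X I₁ I₂ x⁻¹ y⁻¹
      = (∫ ω, max (Msub μ X I₁ h1 ω ^ x⁻¹) (Msub μ X I₂ h2 ω ^ y⁻¹) ∂μ)
        / (1 - ∫ ω, max (Msub μ X I₁ h1 ω ^ x⁻¹) (Msub μ X I₂ h2 ω ^ y⁻¹) ∂μ) := by
  have c1 := core μ hX I₁ I₁ h1 h1 hx hx (fun _ _ _ => rfl)
  have c2 := core μ hX I₂ I₂ h2 h2 hy hy (fun _ _ _ => rfl)
  have c3 := core μ hX I₁ I₂ h1 h2 hx hy
    (fun i hi1 hi2 => absurd hi2 (Finset.disjoint_left.mp hdisj hi1))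
  simp only [max_self] at c1 c2
  refine ⟨?_, ?_, c3⟩
  · rw [scale_extCoef μ hX I₁ hx]; exact c1
  · rw [scale_extCoef μ hX I₂ hy]; exact c2
end

section
/- Let X = (X₁,…,X_d) be a random vector whose joint distribution function F is a MEV distribution with unit Fréchet marginals, and set l(x₁,…,x_d) = −log F(x₁,…,x_d). Then for all x₁,…,x_d > 0, E( ( F₁(X₁)^{x₁} ∨ … ∨ F_d(X_d)^{x_d} )² ) = l(x₁,…,x_d) / ( 2 + l(x₁,…,x_d) ). -/
open MeasureTheory Filter Finset

/-- For a MEV distribution with unit Fréchet marginals and `l = -log F`,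
`E((F₁(X₁)^{x₁} ∨ … ∨ F_d(X_d)^{x_d})²) = l(x₁,…,x_d)/(2 + l(x₁,…,x_d))`. -/
theorem statement14 {Ω : Type*} [MeasurableSpace Ω] (μ : Measure Ω) [IsProbabilityMeasure μ]
    {d : ℕ} (hd : 0 < d) (X : Fin d → Ω → ℝ) (hX : IsMEVFrechet μ X)
    (x : Fin d → ℝ) (hx : ∀ i, 0 < x i) :
    (∫ ω, (Finset.univ.sup' ⟨⟨0, hd⟩, Finset.mem_univ _⟩
          (fun i => margCDF μ X i (X i ω) ^ x i)) ^ 2 ∂μ)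
      = stdf μ X x / (2 + stdf μ X x) := by
  obtain ⟨hmeas, hfrechet, hmax⟩ := hX
  set i₀ : Fin d := ⟨0, hd⟩ with hi₀
  have hne : (Finset.univ : Finset (Fin d)).Nonempty := ⟨i₀, Finset.mem_univ _⟩
  set Y : Ω → ℝ := fun ω => Finset.univ.sup' ⟨⟨0, hd⟩, Finset.mem_univ _⟩
      (fun i => margCDF μ X i (X i ω) ^ x i) with hY
  -- monotonicity and measurability of marginal CDFs
  have hmargnn : ∀ i u, 0 ≤ margCDF μ X i u := fun i u => ENNReal.toReal_nonneg
  have hmono : ∀ i, Monotone (margCDF μ X i) := by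
    intro i u v huv
    exact ENNReal.toReal_mono (measure_ne_top _ _)
      (measure_mono fun ω h => le_trans h huv)
  have hmargmeas : ∀ i, Measurable fun ω => margCDF μ X i (X i ω) ^ x i := by
    intro i
    have h1 : Monotone fun u => margCDF μ X i u ^ x i := fun u v huv =>
      Real.rpow_le_rpow (hmargnn i u) (hmono i huv) (hx i).le
    exact h1.measurable.comp (hmeas i)
  have hYmeas : Measurable Y := by
    have hYfun : Y = Finset.univ.sup' hne fun i ω => margCDF μ X i (X i ω) ^ x i := by
      funext ω; rw [hY, Finset.sup'_apply]
    rw [hYfun]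
    exact Finset.measurable_sup' hne fun i _ => hmargmeas i
  -- a.e. positivity of the coordinates
  have hpos_ae : ∀ᵐ ω ∂μ, ∀ i, 0 < X i ω := by
    rw [ae_all_iff]
    intro i
    rw [ae_iff]
    have hset : {ω | ¬ 0 < X i ω} = {ω | X i ω ≤ 0} := by ext ω; simp [not_lt]
    rw [hset]
    have key : ∀ n : ℕ, (μ {ω | X i ω ≤ 0}).toReal ≤ Real.exp (-((n : ℝ) + 1)) := by
      intro n
      have h1 : μ {ω | X i ω ≤ 0} ≤ μ {ω | X i ω ≤ ((n : ℝ) + 1)⁻¹} :=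
        measure_mono fun ω h => le_trans h (by positivity : (0:ℝ) ≤ ((n : ℝ) + 1)⁻¹)
      have h2 := hfrechet i ((n : ℝ) + 1)⁻¹ (by positivity)
      have h3 : (μ {ω | X i ω ≤ ((n : ℝ) + 1)⁻¹}).toReal
          = Real.exp (-((n : ℝ) + 1)) := by
        have : margCDF μ X i ((n : ℝ) + 1)⁻¹
            = (μ {ω | X i ω ≤ ((n : ℝ) + 1)⁻¹}).toReal := rfl
        rw [← this, h2, inv_inv]
      calc (μ {ω | X i ω ≤ 0}).toReal
          ≤ (μ {ω | X i ω ≤ ((n : ℝ) + 1)⁻¹}).toReal :=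
            ENNReal.toReal_mono (measure_ne_top _ _) h1
        _ = Real.exp (-((n : ℝ) + 1)) := h3
    have hlim : Tendsto (fun n : ℕ => Real.exp (-((n : ℝ) + 1))) atTop (nhds 0) :=
      Real.tendsto_exp_neg_atTop_nhds_zero.comp
        (tendsto_atTop_add_const_right atTop 1 tendsto_natCast_atTop_atTop)
    have hle : (μ {ω | X i ω ≤ 0}).toReal ≤ 0 :=
      ge_of_tendsto hlim (Eventually.of_forall key)
    have h0 : (μ {ω | X i ω ≤ 0}).toReal = 0 :=
      le_antisymm hle ENNReal.toReal_nonneg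
    exact (ENNReal.toReal_eq_zero_iff _).mp h0 |>.resolve_right (measure_ne_top _ _)
  -- measurability of joint sets
  have hSmeas : ∀ c : Fin d → ℝ, MeasurableSet {ω | ∀ i, X i ω ≤ c i} := by
    intro c
    have : {ω | ∀ i, X i ω ≤ c i} = ⋂ i, {ω | X i ω ≤ c i} := by ext ω; simp
    rw [this]
    exact MeasurableSet.iInter fun i => measurableSet_le (hmeas i) measurable_const
  have hFnonneg : ∀ c : Fin d → ℝ, 0 ≤ jointCDF μ X c := fun c => ENNReal.toReal_nonneg
  -- positivity of F
  have hFpos : 0 < jointCDF μ X x := by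
    set S : ℝ := ∑ i, (x i)⁻¹ with hS
    have hS0 : 0 ≤ S := Finset.sum_nonneg fun i _ => (inv_pos.2 (hx i)).le
    set t : ℝ := 2 * S + 1 with ht
    have ht0 : 0 < t := by rw [ht]; linarith
    have hcompl : (μ {ω | ∀ i, X i ω ≤ t * x i}ᶜ).toReal < 1 := by
      have hsub : {ω | ∀ i, X i ω ≤ t * x i}ᶜ ⊆ ⋃ i, {ω | X i ω ≤ t * x i}ᶜ := by
        intro ω hω
        simp only [Set.mem_compl_iff, Set.mem_setOf_eq, not_forall] at hω
        obtain ⟨i, hi⟩ := hω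
        exact Set.mem_iUnion.2 ⟨i, hi⟩
      have h1 : μ ({ω | ∀ i, X i ω ≤ t * x i}ᶜ)
          ≤ ∑ i, μ ({ω | X i ω ≤ t * x i}ᶜ) :=
        le_trans (measure_mono hsub) (measure_iUnion_fintype_le _ _)
      have h2 : (μ {ω | ∀ i, X i ω ≤ t * x i}ᶜ).toReal
          ≤ ∑ i, (μ ({ω | X i ω ≤ t * x i}ᶜ)).toReal := by
        refine le_trans (ENNReal.toReal_mono ?_ h1) ?_
        · exact (ENNReal.sum_lt_top.2 fun i _ => measure_lt_top _ _).ne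
        · rw [ENNReal.toReal_sum fun i _ => measure_ne_top _ _]
      have h3 : ∀ i, (μ ({ω | X i ω ≤ t * x i}ᶜ)).toReal ≤ (t * x i)⁻¹ := by
        intro i
        have hms : MeasurableSet {ω | X i ω ≤ t * x i} :=
          measurableSet_le (hmeas i) measurable_const
        rw [prob_compl_eq_one_sub hms,
          ENNReal.toReal_sub_of_le prob_le_one ENNReal.one_ne_top, ENNReal.toReal_one]
        have hmc : (μ {ω | X i ω ≤ t * x i}).toReal = Real.exp (-(t * x i)⁻¹) :=
          hfrechet i (t * x i) (mul_pos ht0 (hx i))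
        rw [hmc]
        have := Real.add_one_le_exp (-(t * x i)⁻¹)
        linarith
      have h4 : ∑ i, (t * x i)⁻¹ < 1 := by
        have : ∀ i, (t * x i)⁻¹ = t⁻¹ * (x i)⁻¹ := fun i => by rw [mul_inv]
        simp only [this]
        rw [← Finset.mul_sum, ← hS]
        rw [inv_mul_eq_div, div_lt_one ht0]
        linarith
      calc (μ {ω | ∀ i, X i ω ≤ t * x i}ᶜ).toReal
          ≤ ∑ i, (μ ({ω | X i ω ≤ t * x i}ᶜ)).toReal := h2
        _ ≤ ∑ i, (t * x i)⁻¹ := Finset.sum_le_sum fun i _ => h3 i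
        _ < 1 := h4
    have hpos' : 0 < jointCDF μ X (fun i => t * x i) := by
      have hms := hSmeas (fun i => t * x i)
      have := prob_compl_eq_one_sub (μ := μ) hms
      have heq : (μ {ω | ∀ i, X i ω ≤ t * x i}ᶜ).toReal
          = 1 - (μ {ω | ∀ i, X i ω ≤ t * x i}).toReal := by
        rw [this, ENNReal.toReal_sub_of_le prob_le_one ENNReal.one_ne_top,
          ENNReal.toReal_one]
      have : (jointCDF μ X fun i => t * x i)
          = (μ {ω | ∀ i, X i ω ≤ t * x i}).toReal := rfl
      rw [this]
      linarith [hcompl, heq ▸ hcompl]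
    rw [← hmax t ht0 x hx]
    exact Real.rpow_pos_of_pos hpos' t
  -- F < 1, hence l > 0
  have hFlt : jointCDF μ X x < 1 := by
    have h1 : jointCDF μ X x ≤ margCDF μ X i₀ (x i₀) :=
      ENNReal.toReal_mono (measure_ne_top _ _) (measure_mono fun ω h => h i₀)
    have h2 : margCDF μ X i₀ (x i₀) < 1 := by
      rw [hfrechet i₀ (x i₀) (hx i₀)]
      rw [Real.exp_lt_one_iff]
      simp [inv_pos.2 (hx i₀)]
    linarith
  set l : ℝ := stdf μ X x with hldef
  have hlF : Real.log (jointCDF μ X x) = -l := by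
    rw [hldef]; unfold stdf; ring
  have hl : 0 < l := by
    have := Real.log_neg hFpos hFlt
    rw [hldef]; unfold stdf; linarith
  -- the CDF of Y
  have hCDF : ∀ s : ℝ, 0 < s → s < 1 → (μ {ω | Y ω ≤ s}).toReal = s ^ l := by
    intro s hs0 hs1
    set r : ℝ := -Real.log s with hr
    have hr0 : 0 < r := by
      have := Real.log_neg hs0 hs1; rw [hr]; linarith
    have hsetae : {ω | Y ω ≤ s} =ᵐ[μ] {ω | ∀ i, X i ω ≤ r⁻¹ * x i} := by
      rw [Filter.eventuallyEq_set]
      filter_upwards [hpos_ae] with ω hω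
      simp only [Set.mem_setOf_eq, hY, Finset.sup'_le_iff, Finset.mem_univ,
        forall_true_left]
      refine (Finset.sup'_le_iff _ _).trans ?_
      simp only [Finset.mem_univ, forall_true_left]
      refine forall_congr' fun i => ?_
      rw [hfrechet i _ (hω i)]
      have hbase : Real.exp (-(X i ω)⁻¹) ^ x i = Real.exp (-(X i ω)⁻¹ * x i) := by
        rw [Real.rpow_def_of_pos (Real.exp_pos _), Real.log_exp]
      rw [hbase, ← Real.le_log_iff_exp_le hs0,
        show Real.log s = -r by rw [hr]; ring]
      rw [neg_mul, neg_le_neg_iff, inv_mul_eq_div, le_div_iff₀ (hω i),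
        inv_mul_eq_div, le_div_iff₀ hr0, mul_comm]
    rw [measure_congr hsetae]
    have h1 := hmax r⁻¹ (inv_pos.2 hr0) x hx
    have h2 : jointCDF μ X (fun i => r⁻¹ * x i) = jointCDF μ X x ^ r := by
      rw [← h1, ← Real.rpow_mul (hFnonneg _), inv_mul_cancel₀ hr0.ne', Real.rpow_one]
    have h3 : (μ {ω | ∀ i, X i ω ≤ r⁻¹ * x i}).toReal
        = jointCDF μ X (fun i => r⁻¹ * x i) := rfl
    rw [h3, h2, Real.rpow_def_of_pos hFpos, Real.rpow_def_of_pos hs0, hlF,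
      show Real.log s = -r by rw [hr]; ring]
    congr 1
    ring
  -- pointwise bounds on Y
  have hY0 : ∀ ω, 0 ≤ Y ω := by
    intro ω
    rw [hY]
    exact le_trans (Real.rpow_nonneg (hmargnn i₀ (X i₀ ω)) (x i₀))
      (Finset.le_sup' (fun i => margCDF μ X i (X i ω) ^ x i) (Finset.mem_univ i₀))
  have hYlt1 : ∀ᵐ ω ∂μ, Y ω < 1 := by
    filter_upwards [hpos_ae] with ω hω
    rw [hY]
    refine (Finset.sup'_lt_iff _).2 ?_
    intro i _
    rw [hfrechet i _ (hω i)]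
    have hbase : Real.exp (-(X i ω)⁻¹) ^ x i = Real.exp (-(X i ω)⁻¹ * x i) := by
      rw [Real.rpow_def_of_pos (Real.exp_pos _), Real.log_exp]
    rw [hbase, Real.exp_lt_one_iff]
    have h1 : 0 < (X i ω)⁻¹ * x i := mul_pos (inv_pos.2 (hω i)) (hx i)
    linarith
  -- integrability of Y²
  have hint : Integrable (fun ω => Y ω ^ 2) μ := by
    refine Integrable.mono' (integrable_const 1)
      ((hYmeas.pow_const 2).aestronglyMeasurable) ?_
    filter_upwards [hYlt1] with ω hω
    rw [Real.norm_eq_abs, abs_of_nonneg (sq_nonneg _)]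
    nlinarith [hY0 ω]
  -- layer cake
  have hmain : ∫ ω, Y ω ^ 2 ∂μ
      = ∫ t in Set.Ioi (0 : ℝ), (μ {ω | t < Y ω ^ 2}).toReal :=
    Integrable.integral_eq_integral_meas_lt hint
      (Eventually.of_forall fun ω => sq_nonneg _)
  have hgoal : (∫ ω, (Finset.univ.sup' ⟨⟨0, hd⟩, Finset.mem_univ _⟩
      (fun i => margCDF μ X i (X i ω) ^ x i)) ^ 2 ∂μ) = ∫ ω, Y ω ^ 2 ∂μ := rfl
  rw [hgoal, hmain]
  -- identify the integrand
  have hg : Set.EqOn (fun t => (μ {ω | t < Y ω ^ 2}).toReal)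
      (Set.indicator (Set.Iio 1) fun t => 1 - t ^ (l / 2)) (Set.Ioi (0 : ℝ)) := by
    intro t ht
    have ht0 : (0 : ℝ) < t := ht
    show (μ {ω | t < Y ω ^ 2}).toReal = _
    rcases lt_or_ge t 1 with h1 | h1
    · rw [Set.indicator_of_mem (Set.mem_Iio.2 h1)]
      have hseteq : {ω | t < Y ω ^ 2} = {ω | Y ω ≤ Real.sqrt t}ᶜ := by
        ext ω
        simp only [Set.mem_compl_iff, Set.mem_setOf_eq, not_le]
        constructor
        · intro h
          have hYp : 0 < Y ω := by nlinarith [hY0 ω]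
          exact (Real.sqrt_lt' hYp).2 h
        · intro h
          have hYp : 0 < Y ω := lt_of_le_of_lt (Real.sqrt_nonneg t) h
          exact (Real.sqrt_lt' hYp).1 h
      rw [hseteq]
      have hms : MeasurableSet {ω | Y ω ≤ Real.sqrt t} :=
        measurableSet_le hYmeas measurable_const
      rw [prob_compl_eq_one_sub hms,
        ENNReal.toReal_sub_of_le prob_le_one ENNReal.one_ne_top, ENNReal.toReal_one]
      have hst0 : 0 < Real.sqrt t := Real.sqrt_pos.2 ht0
      have hst1 : Real.sqrt t < 1 := by
        rw [Real.sqrt_lt' one_pos]; nlinarith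
      rw [hCDF _ hst0 hst1]
      congr 1
      rw [Real.sqrt_eq_rpow, ← Real.rpow_mul ht0.le]
      congr 1
      ring
    · rw [Set.indicator_of_notMem (fun hmem => absurd (Set.mem_Iio.1 hmem) (not_lt.2 h1))]
      have h0 : μ {ω | ¬ Y ω < 1} = 0 := ae_iff.1 hYlt1
      have hz : μ {ω | t < Y ω ^ 2} = 0 := by
        refine measure_mono_null ?_ h0
        intro ω hω
        simp only [Set.mem_setOf_eq, not_lt] at *
        nlinarith [hY0 ω]
      simp [hz]
  rw [setIntegral_congr_fun measurableSet_Ioi hg,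
    setIntegral_indicator measurableSet_Iio, Set.Ioi_inter_Iio,
    ← MeasureTheory.integral_Ioc_eq_integral_Ioo,
    ← intervalIntegral.integral_of_le zero_le_one]
  have hl2 : (-1 : ℝ) < l / 2 := by linarith
  rw [intervalIntegral.integral_sub intervalIntegrable_const
    (intervalIntegral.intervalIntegrable_rpow' hl2)]
  rw [intervalIntegral.integral_const, integral_rpow (Or.inl hl2)]
  rw [Real.one_rpow, Real.zero_rpow (by positivity : l / 2 + 1 ≠ 0)]
  have hne1 : l / 2 + 1 ≠ 0 := by positivity
  have hne2 : (2 : ℝ) + l ≠ 0 := by positivity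
  rw [smul_eq_mul]
  field_simp
  ring
end
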